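/- arXiv:2605.30402 — 6 statements merged into one kernel-verified Lean document; each statement's English description precedes it below -/
import Mathlib

section
/- Let λ ≥ -1/2 be a real number and let n ≥ 3. If T is a tree with n vertices and maximum degree Δ with Δ < n-1, then GRM_λ(T) ≥ n(2+λ)² − 3(2+λ) + (1+λ)(Δ² − 3Δ − λ). -/
open SimpleGraph Finset

/-- Degree of a vertex (classical decidability). -/
noncomputable def deg {V : Type*} [Fintype V] (G : SimpleGraph V) (v : V) : ℕ :=
  letI := Classical.decEq V
  letI : DecidableRel G.Adj := Classical.decRel _
  G.degree v

/-- Maximum degree of a graph (classical decidability). -/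
noncomputable def maxDeg {V : Type*} [Fintype V] (G : SimpleGraph V) : ℕ :=
  letI := Classical.decEq V
  letI : DecidableRel G.Adj := Classical.decRel _
  G.maxDegree

/-- The general reduced second Zagreb index
`GRM_λ(G) = Σ_{ab ∈ E(G)} (deg a + λ)(deg b + λ)`. -/
noncomputable def GRM {V : Type*} [Fintype V] (l : ℝ) (G : SimpleGraph V) : ℝ :=
  letI := Classical.decEq V
  letI : DecidableRel G.Adj := Classical.decRel _
  ∑ e ∈ G.edgeFinset,
    Sym2.lift ⟨fun a b => ((G.degree a : ℝ) + l) * ((G.degree b : ℝ) + l),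
      fun a b => by ring⟩ e

/-- A unicyclic graph: connected with exactly as many edges as vertices. -/
def IsUnicyclic {V : Type*} [Fintype V] (G : SimpleGraph V) : Prop :=
  G.Connected ∧ G.edgeSet.ncard = Fintype.card V

/-- A vertex lies on a cycle of `G`. -/
def OnCycle {V : Type*} (G : SimpleGraph V) (v : V) : Prop :=
  ∃ (u : V) (w : G.Walk u u), w.IsCycle ∧ v ∈ w.support

section Aux

set_option linter.unusedSectionVars false

variable {V : Type*} [Fintype V] [DecidableEq V] (G : SimpleGraph V) [DecidableRel G.Adj]

private lemma sum_dart_eq_edge' (F : V → V → ℝ) :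
    ∑ x : G.Dart, F x.fst x.snd
      = ∑ e ∈ G.edgeFinset, Sym2.lift ⟨fun a b => F a b + F b a, fun _ _ => add_comm _ _⟩ e := by
  rw [← Finset.sum_fiberwise_of_maps_to (g := fun d : G.Dart => d.edge) (t := G.edgeFinset)
      (fun d _ => by rw [mem_edgeFinset]; exact d.edge_mem)]
  refine Finset.sum_congr rfl fun e he => ?_
  rw [mem_edgeFinset] at he
  induction' e with u v
  let d : G.Dart := ⟨(u, v), he⟩
  have hfib : Finset.univ.filter (fun d' : G.Dart => d'.edge = d.edge) = {d, d.symm} :=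
    d.edge_fiber
  have hde : d.edge = s(u, v) := rfl
  rw [← hde, hfib, Finset.sum_pair d.symm_ne.symm]
  simp [d, Dart.symm, Sym2.lift_mk]
  rfl

private lemma sum_dart_fst' (f : V → ℝ) :
    ∑ x : G.Dart, f x.fst = ∑ v, (G.degree v : ℝ) * f v := by
  rw [← Finset.sum_fiberwise_of_maps_to (g := fun d : G.Dart => d.fst) (t := Finset.univ)
    (fun d _ => mem_univ _)]
  refine Finset.sum_congr rfl fun v _ => ?_
  have h1 : ∀ x ∈ Finset.univ.filter (fun d : G.Dart => d.fst = v), f x.fst = f v :=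
    fun x hx => by rw [(mem_filter.mp hx).2]
  rw [Finset.sum_congr rfl h1, Finset.sum_const, G.dart_fst_fiber_card_eq_degree v,
    nsmul_eq_mul]

private def dartSymmEquiv' : G.Dart ≃ G.Dart :=
  ⟨Dart.symm, Dart.symm, fun d => d.symm_symm, fun d => d.symm_symm⟩

private lemma sum_dart_snd' (f : V → ℝ) :
    ∑ x : G.Dart, f x.snd = ∑ x : G.Dart, f x.fst :=
  Fintype.sum_equiv (dartSymmEquiv' G) _ _ (fun _ => rfl)

private lemma filter_sum_symm' (p : V → Prop) [DecidablePred p] (f : V → V → ℝ) :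
    ∑ x ∈ Finset.univ.filter (fun d : G.Dart => p d.fst ∧ p d.snd), f x.snd x.fst
      = ∑ x ∈ Finset.univ.filter (fun d : G.Dart => p d.fst ∧ p d.snd), f x.fst x.snd := by
  refine Finset.sum_nbij' (fun d => d.symm) (fun d => d.symm) ?_ ?_ ?_ ?_ ?_
  · intro a ha; simp only [mem_filter, mem_univ, true_and] at ha ⊢; exact ha.symm
  · intro a ha; simp only [mem_filter, mem_univ, true_and] at ha ⊢; exact ha.symm
  · intro a _; exact a.symm_symm
  · intro a _; exact a.symm_symm
  · intro a _; rfl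

private lemma card_dart_fst_mem' (A : Finset V) :
    (Finset.univ.filter (fun d : G.Dart => d.fst ∈ A)).card = ∑ v ∈ A, G.degree v := by
  rw [Finset.card_eq_sum_card_fiberwise (f := fun d : G.Dart => d.fst) (s := Finset.univ.filter (fun d : G.Dart => d.fst ∈ A)) (t := A)
    (fun d hd => (mem_filter.mp hd).2)]
  refine Finset.sum_congr rfl fun v hv => ?_
  rw [← G.dart_fst_fiber_card_eq_degree v]
  congr 1
  ext d
  simp only [mem_filter, mem_univ, true_and, and_iff_right_iff_imp]
  rintro rfl; exact hv

private lemma card_dart_snd_mem' (A : Finset V) :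
    (Finset.univ.filter (fun d : G.Dart => d.snd ∈ A)).card = ∑ v ∈ A, G.degree v := by
  rw [← card_dart_fst_mem']
  refine Finset.card_nbij' (fun d => d.symm) (fun d => d.symm) ?_ ?_ ?_ ?_
  · intro a ha; simpa using (mem_filter.mp ha).2
  · intro a ha; simpa using (mem_filter.mp ha).2
  · intro a _; exact a.symm_symm
  · intro a _; exact a.symm_symm

private lemma exists_adj_of_connected' (hc : G.Connected) (h2 : 2 ≤ Fintype.card V) (v : V) :
    ∃ w, G.Adj v w := by
  obtain ⟨u, hu⟩ := Fintype.exists_ne_of_one_lt_card (by omega) v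
  obtain ⟨w⟩ := hc v u
  cases w with
  | nil => exact absurd rfl hu.symm
  | cons h q => exact ⟨_, h⟩

private lemma degree_pos_of_connected' (hc : G.Connected) (h2 : 2 ≤ Fintype.card V) (v : V) :
    1 ≤ G.degree v := by
  obtain ⟨w, hw⟩ := exists_adj_of_connected' G hc h2 v
  exact (G.degree_pos_iff_exists_adj v).mpr ⟨w, hw⟩

private lemma exists_internal_neighbor' (hc : G.Connected)
    (hlt : G.maxDegree + 1 < Fintype.card V) (v : V) :
    ∃ w, G.Adj v w ∧ 2 ≤ G.degree w := by
  by_contra hno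
  push_neg at hno
  have hsub : (Finset.univ : Finset V) ⊆ insert v (G.neighborFinset v) := by
    intro u _
    by_cases huv : u = v
    · simp [huv]
    · obtain ⟨walk⟩ := hc v u
      obtain ⟨pw, hp⟩ := walk.toPath
      cases pw with
      | nil => exact absurd rfl (Ne.symm huv)
      | cons h q =>
        rename_i b
        rw [Walk.cons_isPath_iff] at hp
        cases q with
        | nil => simp [h]
        | cons h' q' =>
          rename_i c
          exfalso
          have hcv : c ≠ v := by
            intro hrfl
            have hvmem : v ∈ (Walk.cons h' q').support := by
              rw [Walk.support_cons]
              exact List.mem_cons_of_mem _ (hrfl ▸ q'.start_mem_support)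
            exact hp.2 hvmem
          have h2b : 2 ≤ G.degree b := by
            rw [← card_neighborFinset_eq_degree]
            refine Finset.one_lt_card.mpr ⟨v, ?_, c, ?_, (Ne.symm hcv)⟩
            · simp [h.symm]
            · simp [h']
          have := hno b h
          omega
  have hcard : Fintype.card V ≤ 1 + G.degree v := by
    calc Fintype.card V = (Finset.univ : Finset V).card := (Finset.card_univ).symm
    _ ≤ (insert v (G.neighborFinset v)).card := Finset.card_le_card hsub
    _ ≤ (G.neighborFinset v).card + 1 := Finset.card_insert_le _ _
    _ = 1 + G.degree v := by rw [card_neighborFinset_eq_degree]; omega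
  have := G.degree_le_maxDegree v
  omega

private lemma nat_sq_help' (k : ℕ) (hk : 1 ≤ k) : 3 * k ≤ k * k + 2 := by
  obtain ⟨j, rfl⟩ := Nat.exists_eq_add_of_le hk
  nlinarith [Nat.zero_le j, Nat.le_mul_of_pos_left j (Nat.succ_pos 0), sq_nonneg j]

private lemma Qbound' (n Δ : ℕ) (hn : 3 ≤ n) (hcard : Fintype.card V = n)
    (hmax : G.maxDegree = Δ) (hdeg1 : ∀ v, 1 ≤ G.degree v)
    (hhs : ∑ v, G.degree v = 2 * (n - 1)) :
    (Δ:ℝ)^2 + 4*n - 3*Δ - 4 ≤ ∑ v, (G.degree v : ℝ) * (G.degree v : ℝ) := by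
  have hne : Nonempty V := Fintype.card_pos_iff.mp (by omega)
  obtain ⟨v₀, hv₀⟩ := G.exists_maximal_degree_vertex
  rw [hmax] at hv₀
  have hsum_deg : ∑ v, (G.degree v : ℝ) = 2 * ((n:ℝ) - 1) := by
    have h1 : ((∑ v, G.degree v : ℕ) : ℝ) = ∑ v, (G.degree v : ℝ) := by push_cast; ring
    rw [← h1, hhs]
    have : (1:ℕ) ≤ n := by omega
    push_cast [Nat.cast_sub this]
    ring
  have herase : ∑ v ∈ univ.erase v₀, (G.degree v : ℝ) = 2 * ((n:ℝ) - 1) - Δ := by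
    have := Finset.add_sum_erase univ (fun v => (G.degree v : ℝ)) (mem_univ v₀)
    rw [hsum_deg] at this
    rw [← this, hv₀]
    ring
  have hsq : ∀ v ∈ univ.erase v₀, 3 * (G.degree v : ℝ) - 2 ≤ (G.degree v : ℝ) * (G.degree v) := by
    intro v _
    have h0 := nat_sq_help' (G.degree v) (hdeg1 v)
    have h1 : (3 * G.degree v : ℝ) ≤ (G.degree v : ℝ) * G.degree v + 2 := by exact_mod_cast h0
    linarith
  have h2 : ∑ v ∈ univ.erase v₀, (3 * (G.degree v : ℝ) - 2)
      ≤ ∑ v ∈ univ.erase v₀, (G.degree v : ℝ) * (G.degree v : ℝ) :=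
    Finset.sum_le_sum hsq
  have hcd : ((univ.erase v₀).card : ℝ) = (n:ℝ) - 1 := by
    rw [Finset.card_erase_of_mem (mem_univ v₀), Finset.card_univ, hcard]
    have : (1:ℕ) ≤ n := by omega
    push_cast [Nat.cast_sub this]
    ring
  have h3 : ∑ v ∈ univ.erase v₀, (3 * (G.degree v : ℝ) - 2)
      = 3 * (2 * ((n:ℝ)-1) - Δ) - 2 * ((n:ℝ)-1) := by
    rw [Finset.sum_sub_distrib, ← Finset.mul_sum, herase, Finset.sum_const, nsmul_eq_mul, hcd]
    ring
  have h4 := Finset.add_sum_erase univ (fun v => (G.degree v : ℝ) * (G.degree v : ℝ)) (mem_univ v₀)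
  rw [← h4, ← hv₀]
  rw [h3] at h2
  nlinarith [h2, sq_nonneg ((Δ:ℝ))]

private lemma Pbound' (n : ℕ) (hn : 3 ≤ n) (hcard : Fintype.card V = n)
    (hdeg1 : ∀ v, 1 ≤ G.degree v)
    (hch : ∀ v : V, ∃ w, G.Adj v w ∧ 2 ≤ G.degree w)
    (hhs : ∑ v, G.degree v = 2 * (n - 1))
    (hedge : #G.edgeFinset = n - 1) :
    2 * ((n:ℝ) - 3) ≤ ∑ x : G.Dart, ((G.degree x.fst : ℝ) - 1) * ((G.degree x.snd : ℝ) - 1) := by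
  set S : Finset G.Dart :=
    Finset.univ.filter (fun x : G.Dart => 2 ≤ G.degree x.fst ∧ 2 ≤ G.degree x.snd) with hS
  set I : Finset V := Finset.univ.filter (fun v => 2 ≤ G.degree v) with hI
  set Lf : Finset V := Finset.univ.filter (fun v => ¬ 2 ≤ G.degree v) with hLf
  have hdeg1' : ∀ v, (1:ℝ) ≤ (G.degree v : ℝ) := fun v => by exact_mod_cast hdeg1 v
  have hLfdeg : ∀ v ∈ Lf, G.degree v = 1 := by
    intro v hv
    have h1 := (mem_filter.mp hv).2
    have h2 := hdeg1 v
    omega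
  have ha : ∑ x ∈ S, ((G.degree x.fst : ℝ) - 1) * ((G.degree x.snd : ℝ) - 1)
      ≤ ∑ x : G.Dart, ((G.degree x.fst : ℝ) - 1) * ((G.degree x.snd : ℝ) - 1) := by
    refine Finset.sum_le_sum_of_subset_of_nonneg (Finset.subset_univ S) ?_
    intro x _ _
    have h1 := hdeg1' x.fst
    have h2 := hdeg1' x.snd
    nlinarith
  have hb : ∑ x ∈ S, (((G.degree x.fst : ℝ) - 2) + ((G.degree x.snd : ℝ) - 2) + 1)
      ≤ ∑ x ∈ S, ((G.degree x.fst : ℝ) - 1) * ((G.degree x.snd : ℝ) - 1) := by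
    refine Finset.sum_le_sum fun x hx => ?_
    obtain ⟨h1, h2⟩ := (mem_filter.mp hx).2
    have h1' : (2:ℝ) ≤ (G.degree x.fst : ℝ) := by exact_mod_cast h1
    have h2' : (2:ℝ) ≤ (G.degree x.snd : ℝ) := by exact_mod_cast h2
    nlinarith
  have hc : ∑ x ∈ S, ((G.degree x.snd : ℝ) - 2) = ∑ x ∈ S, ((G.degree x.fst : ℝ) - 2) :=
    filter_sum_symm' G (fun v => 2 ≤ G.degree v) (fun a _ => (G.degree a : ℝ) - 2)
  choose wf hadj hwdeg using hch
  have hdd : ∑ v ∈ I, ((G.degree v : ℝ) - 2) ≤ ∑ x ∈ S, ((G.degree x.fst : ℝ) - 2) := by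
    have himg : I.image (fun v => (⟨(v, wf v), hadj v⟩ : G.Dart)) ⊆ S := by
      intro x hx
      obtain ⟨v, hv, rfl⟩ := Finset.mem_image.mp hx
      simp only [hS, mem_filter, mem_univ, true_and]
      exact ⟨(mem_filter.mp hv).2, hwdeg v⟩
    have hinj : ∀ x ∈ I, ∀ y ∈ I,
        (⟨(x, wf x), hadj x⟩ : G.Dart) = ⟨(y, wf y), hadj y⟩ → x = y := by
      intro x _ y _ h
      exact congrArg (fun z : G.Dart => z.fst) h
    calc ∑ v ∈ I, ((G.degree v : ℝ) - 2)
        = ∑ x ∈ I.image (fun v => (⟨(v, wf v), hadj v⟩ : G.Dart)), ((G.degree x.fst : ℝ) - 2) := by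
          rw [Finset.sum_image hinj]
      _ ≤ ∑ x ∈ S, ((G.degree x.fst : ℝ) - 2) := by
          refine Finset.sum_le_sum_of_subset_of_nonneg himg ?_
          intro x hx _
          have h1 := (mem_filter.mp hx).2.1
          have h2 : (2:ℝ) ≤ (G.degree x.fst : ℝ) := by exact_mod_cast h1
          linarith
  have hsum_deg : ∑ v, (G.degree v : ℝ) = 2 * ((n:ℝ) - 1) := by
    have h1 : ((∑ v, G.degree v : ℕ) : ℝ) = ∑ v, (G.degree v : ℝ) := by push_cast; rfl
    rw [← h1, hhs]
    have h2 : (1:ℕ) ≤ n := by omega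
    push_cast [Nat.cast_sub h2]
    ring
  have hIL : ∑ v ∈ I, ((G.degree v : ℝ) - 2) + ∑ v ∈ Lf, ((G.degree v : ℝ) - 2)
      = ∑ v, ((G.degree v : ℝ) - 2) :=
    Finset.sum_filter_add_sum_filter_not univ _ _
  have hLfsum : ∑ v ∈ Lf, ((G.degree v : ℝ) - 2) = - (Lf.card : ℝ) := by
    have h1 : ∀ v ∈ Lf, ((G.degree v : ℝ) - 2) = -1 := by
      intro v hv
      rw [hLfdeg v hv]
      norm_num
    rw [Finset.sum_congr rfl h1, Finset.sum_const]
    simp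
  have htot : ∑ v, ((G.degree v : ℝ) - 2) = 2 * ((n:ℝ) - 1) - 2 * n := by
    rw [Finset.sum_sub_distrib, hsum_deg, Finset.sum_const, Finset.card_univ, hcard]
    ring
  have he : ∑ v ∈ I, ((G.degree v : ℝ) - 2) = (Lf.card : ℝ) - 2 := by
    linarith [hIL, hLfsum, htot]
  have hf : 2 * (n - 1) ≤ S.card + 2 * Lf.card := by
    have hcompl : S.card
        + (univ.filter (fun x : G.Dart => ¬(2 ≤ G.degree x.fst ∧ 2 ≤ G.degree x.snd))).card
        = (univ : Finset G.Dart).card := by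
      rw [hS]
      exact Finset.card_filter_add_card_filter_not _
    have hdarts : (univ : Finset G.Dart).card = 2 * (n - 1) := by
      rw [Finset.card_univ, G.dart_card_eq_twice_card_edges, hedge]
    have hsubc : (univ.filter (fun x : G.Dart => ¬(2 ≤ G.degree x.fst ∧ 2 ≤ G.degree x.snd)))
        ⊆ (univ.filter (fun x : G.Dart => x.fst ∈ Lf))
          ∪ (univ.filter (fun x : G.Dart => x.snd ∈ Lf)) := by
      intro x hx
      have hx2 := (mem_filter.mp hx).2
      rw [not_and_or] at hx2
      rcases hx2 with h | h
      · exact Finset.mem_union_left _ (mem_filter.mpr ⟨mem_univ _, mem_filter.mpr ⟨mem_univ _, h⟩⟩)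
      · exact Finset.mem_union_right _ (mem_filter.mpr ⟨mem_univ _, mem_filter.mpr ⟨mem_univ _, h⟩⟩)
    have h1 : (univ.filter (fun x : G.Dart => x.fst ∈ Lf)).card = Lf.card := by
      rw [card_dart_fst_mem']
      rw [Finset.sum_congr rfl hLfdeg, Finset.sum_const, smul_eq_mul, mul_one]
    have h2 : (univ.filter (fun x : G.Dart => x.snd ∈ Lf)).card = Lf.card := by
      rw [card_dart_snd_mem']
      rw [Finset.sum_congr rfl hLfdeg, Finset.sum_const, smul_eq_mul, mul_one]
    have h3 := Finset.card_le_card hsubc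
    have h4 := Finset.card_union_le (univ.filter (fun x : G.Dart => x.fst ∈ Lf))
      (univ.filter (fun x : G.Dart => x.snd ∈ Lf))
    omega
  have hcount : ∑ x ∈ S, (((G.degree x.fst : ℝ) - 2) + ((G.degree x.snd : ℝ) - 2) + 1)
      = 2 * ∑ x ∈ S, ((G.degree x.fst : ℝ) - 2) + (S.card : ℝ) := by
    rw [Finset.sum_add_distrib, Finset.sum_add_distrib, hc, Finset.sum_const, nsmul_eq_mul, mul_one]
    ring
  have hfR : 2 * ((n:ℝ) - 1) - 2 * (Lf.card : ℝ) ≤ (S.card : ℝ) := by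
    have h0 : ((2 * (n-1) : ℕ) : ℝ) ≤ ((S.card + 2 * Lf.card : ℕ) : ℝ) := by exact_mod_cast hf
    have h1 : (1:ℕ) ≤ n := by omega
    push_cast [Nat.cast_sub h1] at h0
    linarith
  calc 2 * ((n:ℝ) - 3)
      ≤ 2 * ((Lf.card : ℝ) - 2) + (2 * ((n:ℝ) - 1) - 2 * (Lf.card : ℝ)) := by linarith
    _ ≤ 2 * ∑ x ∈ S, ((G.degree x.fst : ℝ) - 2) + (S.card : ℝ) := by
        rw [he] at hdd
        linarith
    _ = ∑ x ∈ S, (((G.degree x.fst : ℝ) - 2) + ((G.degree x.snd : ℝ) - 2) + 1) := hcount.symm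
    _ ≤ ∑ x ∈ S, ((G.degree x.fst : ℝ) - 1) * ((G.degree x.snd : ℝ) - 1) := hb
    _ ≤ ∑ x : G.Dart, ((G.degree x.fst : ℝ) - 1) * ((G.degree x.snd : ℝ) - 1) := ha

private theorem key' (l : ℝ) (hl : -1/2 ≤ l) (n Δ : ℕ) (hn : 3 ≤ n) (hT : G.IsTree)
    (hcard : Fintype.card V = n) (hmax : G.maxDegree = Δ) (hΔ : Δ < n - 1) :
    (∑ e ∈ G.edgeFinset,
        Sym2.lift ⟨fun a b => ((G.degree a : ℝ) + l) * ((G.degree b : ℝ) + l),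
          fun a b => by ring⟩ e)
      ≥ (n : ℝ) * (2 + l) ^ 2 - 3 * (2 + l)
        + (1 + l) * ((Δ : ℝ) ^ 2 - 3 * (Δ : ℝ) - l) := by
  have hconn := hT.isConnected
  have hedge : #G.edgeFinset = n - 1 := by
    have := hT.card_edgeFinset
    omega
  have hhs : ∑ v, G.degree v = 2 * (n - 1) := by
    rw [G.sum_degrees_eq_twice_card_edges, hedge]
  have hdeg1 : ∀ v, 1 ≤ G.degree v :=
    degree_pos_of_connected' G hconn (by omega)
  have hch : ∀ v : V, ∃ w, G.Adj v w ∧ 2 ≤ G.degree w :=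
    exists_internal_neighbor' G hconn (by omega)
  have hQ := Qbound' G n Δ hn hcard hmax hdeg1 hhs
  have hP := Pbound' G n hn hcard hdeg1 hch hhs hedge
  have hdartformula : ∑ x : G.Dart, ((G.degree x.fst : ℝ) + l) * ((G.degree x.snd : ℝ) + l)
      = 2 * ∑ e ∈ G.edgeFinset,
          Sym2.lift ⟨fun a b => ((G.degree a : ℝ) + l) * ((G.degree b : ℝ) + l),
            fun a b => by ring⟩ e := by
    rw [sum_dart_eq_edge' G (fun a b => ((G.degree a : ℝ) + l) * ((G.degree b : ℝ) + l)),
      Finset.mul_sum]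
    refine Finset.sum_congr rfl fun e he => ?_
    induction' e with u v
    rw [Sym2.lift_mk, Sym2.lift_mk]
    ring
  have hcardDart : (Fintype.card G.Dart : ℝ) = 2 * ((n:ℝ) - 1) := by
    rw [G.dart_card_eq_twice_card_edges, hedge]
    have h1 : (1:ℕ) ≤ n := by omega
    push_cast [Nat.cast_sub h1]
    ring
  have hsplit : ∑ x : G.Dart, ((G.degree x.fst : ℝ) + l) * ((G.degree x.snd : ℝ) + l)
      = (1 + l) * (2 * (∑ v, (G.degree v : ℝ) * (G.degree v : ℝ))
          + (l - 1) * (2 * ((n:ℝ) - 1)))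
        + ∑ x : G.Dart, ((G.degree x.fst : ℝ) - 1) * ((G.degree x.snd : ℝ) - 1) := by
    have e1 : ∀ x : G.Dart, ((G.degree x.fst : ℝ) + l) * ((G.degree x.snd : ℝ) + l)
        = (1 + l) * ((G.degree x.fst : ℝ) + (G.degree x.snd : ℝ) + (l - 1))
          + ((G.degree x.fst : ℝ) - 1) * ((G.degree x.snd : ℝ) - 1) := fun x => by ring
    rw [Finset.sum_congr rfl (fun x _ => e1 x), Finset.sum_add_distrib, ← Finset.mul_sum]
    congr 1
    congr 1
    rw [Finset.sum_add_distrib, Finset.sum_add_distrib,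
      sum_dart_snd' G (fun v => (G.degree v : ℝ)), sum_dart_fst' G (fun v => (G.degree v : ℝ)),
      Finset.sum_const, Finset.card_univ, nsmul_eq_mul, hcardDart]
    ring
  have hl1 : (0:ℝ) ≤ 1 + l := by linarith
  have hprod : 0 ≤ (1 + l) * ((∑ v, (G.degree v : ℝ) * (G.degree v : ℝ))
      - ((Δ:ℝ)^2 + 4*n - 3*Δ - 4)) := mul_nonneg hl1 (by linarith)
  rw [ge_iff_le, ← mul_le_mul_iff_right₀ (show (0:ℝ) < 2 by norm_num), ← hdartformula, hsplit]
  nlinarith [hprod, hP]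

end Aux

theorem stmt0 {V : Type*} [Fintype V] (l : ℝ) (hl : -1/2 ≤ l)
    (n Δ : ℕ) (hn : 3 ≤ n) (T : SimpleGraph V) (hT : T.IsTree)
    (hcard : Fintype.card V = n) (hmax : maxDeg T = Δ) (hΔ : Δ < n - 1) :
    GRM l T ≥ (n : ℝ) * (2 + l) ^ 2 - 3 * (2 + l)
      + (1 + l) * ((Δ : ℝ) ^ 2 - 3 * (Δ : ℝ) - l) := by
  letI := Classical.decEq V
  letI : DecidableRel T.Adj := Classical.decRel _
  have hmax' : T.maxDegree = Δ := hmax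
  exact key' T l hl n Δ hn hT hcard hmax' hΔ
end

section
/- Let λ be a real number, and let 3 ≤ Δ < n-1. If T is a spider tree with n vertices whose center a has degree Δ, such that exactly Δ-1 neighbors of a are leaves and the remaining leg of a is a path of length n-Δ (so exactly one leg has length greater than one), then GRM_λ(T) = n(2+λ)² − 3(2+λ) + (1+λ)(Δ² − 3Δ − λ). -/
open SimpleGraph

open Finset in
lemma walk_closed {V : Type*} {G : SimpleGraph V} {s : Set V}
    (hs : ∀ x ∈ s, ∀ y, G.Adj x y → y ∈ s) :
    ∀ {u v : V}, G.Walk u v → u ∈ s → v ∈ s := by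
  intro u v p
  induction p with
  | nil => exact id
  | cons h p ih => exact fun hu => ih (hs _ hu _ h)

open Finset in
theorem stmt2 {V : Type*} [Fintype V] (l : ℝ) (n Δ : ℕ)
    (hΔ3 : 3 ≤ Δ) (hΔn : Δ < n - 1) (T : SimpleGraph V) (hT : T.IsTree)
    (hcard : Fintype.card V = n) (a : V) (hdega : deg T a = Δ)
    (hleaves : {v : V | T.Adj a v ∧ deg T v = 1}.ncard = Δ - 1)
    (hspider : ∀ v : V, v ≠ a → deg T v ≤ 2) :
    GRM l T = (n : ℝ) * (2 + l) ^ 2 - 3 * (2 + l)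
      + (1 + l) * ((Δ : ℝ) ^ 2 - 3 * (Δ : ℝ) - l) := by
  classical
  letI := Classical.decEq V
  letI : DecidableRel T.Adj := Classical.decRel _
  have hdeg : ∀ v, deg T v = T.degree v := fun _ => rfl
  simp only [hdeg] at hdega hleaves hspider
  have hn : Δ + 2 ≤ n := by omega
  have hV2 : 1 < Fintype.card V := by omega
  -- every vertex has positive degree
  have hd1 : ∀ v : V, 1 ≤ T.degree v := by
    intro v
    obtain ⟨u, hu⟩ := Fintype.exists_ne_of_one_lt_card hV2 v
    obtain ⟨p⟩ := hT.isConnected.preconnected v u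
    cases p with
    | nil => exact absurd rfl hu
    | cons h _ =>
      rw [show (1 : ℕ) ≤ T.degree v ↔ 0 < T.degree v from Iff.rfl,
        SimpleGraph.degree_pos_iff_exists_adj]
      exact ⟨_, h⟩
  have hedges : T.edgeFinset.card = n - 1 := by
    have := hT.card_edgeFinset; omega
  -- the unique neighbor of a leaf
  have hNleaf : ∀ u v : V, T.Adj u v → T.degree u = 1 →
      T.neighborFinset u = {v} := by
    intro u v ha h1
    refine (Finset.eq_of_subset_of_card_le ?_ ?_).symm
    · simpa using ha
    · simp [SimpleGraph.card_neighborFinset_eq_degree, h1]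
  -- no two leaves are adjacent
  have hll : ∀ u v : V, T.Adj u v → T.degree u = 1 → T.degree v = 1 → False := by
    intro u v ha h1 h2
    have hNu := hNleaf u v ha h1
    have hNv := hNleaf v u ha.symm h2
    have key : ∀ x ∈ ({u, v} : Set V), ∀ y, T.Adj x y → y ∈ ({u, v} : Set V) := by
      rintro x (rfl | rfl) y hy
      · have hyx : y ∈ T.neighborFinset x := by simpa using hy
        rw [hNu] at hyx
        right; simpa using hyx
      · have hyx : y ∈ T.neighborFinset x := by simpa using hy
        rw [hNv] at hyx
        left; simpa using hyx
    obtain ⟨p⟩ := hT.isConnected.preconnected u a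
    have haa : a ∈ ({u, v} : Set V) := walk_closed key p (by simp)
    rcases haa with rfl | haa
    · omega
    · rw [Set.mem_singleton_iff] at haa; subst haa; omega
  -- the finset of leaf-neighbors of a
  have hLNcard : (Finset.univ.filter
      (fun v => T.Adj a v ∧ T.degree v = 1)).card = Δ - 1 := by
    rw [Set.ncard_eq_toFinset_card'] at hleaves
    rw [← hleaves]
    congr 1
    ext v
    simp [Set.mem_toFinset]
  -- counting leaves via the handshake lemma
  have hsum : ∑ v, T.degree v = 2 * (n - 1) := by
    rw [SimpleGraph.sum_degrees_eq_twice_card_edges, hedges]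
  have hS1card : ((Finset.univ.erase a).filter
      (fun v => T.degree v = 1)).card = Δ := by
    have e1 : ∑ v ∈ Finset.univ.erase a, T.degree v + T.degree a
        = ∑ v, T.degree v := Finset.sum_erase_add _ _ (Finset.mem_univ a)
    have c12 : ((Finset.univ.erase a).filter (fun v => T.degree v = 1)).card
        + ((Finset.univ.erase a).filter (fun v => ¬ T.degree v = 1)).card
        = n - 1 := by
      rw [Finset.card_filter_add_card_filter_not]
      rw [Finset.card_erase_of_mem (Finset.mem_univ a), Finset.card_univ, hcard]
    have s1 : ∑ v ∈ (Finset.univ.erase a).filter (fun v => T.degree v = 1),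
        T.degree v
        = ((Finset.univ.erase a).filter (fun v => T.degree v = 1)).card := by
      rw [Finset.sum_congr rfl (fun v hv => (Finset.mem_filter.1 hv).2),
        Finset.sum_const, smul_eq_mul, mul_one]
    have s2 : ∑ v ∈ (Finset.univ.erase a).filter (fun v => ¬ T.degree v = 1),
        T.degree v
        = 2 * ((Finset.univ.erase a).filter (fun v => ¬ T.degree v = 1)).card := by
      rw [Finset.sum_congr rfl (fun v hv => ?_), Finset.sum_const, smul_eq_mul,
        mul_comm]
      have hv' := Finset.mem_filter.1 hv
      have hva : v ≠ a := Finset.ne_of_mem_erase hv'.1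
      have := hspider v hva
      have := hd1 v
      omega
    have e2 : ∑ v ∈ Finset.univ.erase a, T.degree v
        = ∑ v ∈ (Finset.univ.erase a).filter (fun v => T.degree v = 1), T.degree v
        + ∑ v ∈ (Finset.univ.erase a).filter (fun v => ¬ T.degree v = 1),
            T.degree v := by
      rw [Finset.sum_filter_add_sum_filter_not]
    rw [e2, s1, s2] at e1
    omega
  have hLFcard : (Finset.univ.filter (fun v => T.degree v = 1)).card = Δ := by
    rw [← hS1card]
    congr 1
    ext v
    simp only [Finset.mem_filter, Finset.mem_univ, true_and, and_true,
      Finset.mem_erase]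
    constructor
    · intro h
      exact ⟨fun hv => by subst hv; omega, h⟩
    · exact fun h => h.2
  -- the unique leaf not adjacent to a
  have hLNsub : Finset.univ.filter (fun v => T.Adj a v ∧ T.degree v = 1)
      ⊆ Finset.univ.filter (fun v => T.degree v = 1) := by
    intro v hv
    simp only [Finset.mem_filter] at *
    exact ⟨hv.1, hv.2.2⟩
  have hUcard : ((Finset.univ.filter (fun v => T.degree v = 1))
      \ (Finset.univ.filter (fun v => T.Adj a v ∧ T.degree v = 1))).card = 1 := by
    rw [Finset.card_sdiff_of_subset hLNsub, hLFcard, hLNcard]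
    omega
  obtain ⟨u0, hu0⟩ := Finset.card_eq_one.1 hUcard
  have hu0' : u0 ∈ (Finset.univ.filter (fun v => T.degree v = 1))
      \ (Finset.univ.filter (fun v => T.Adj a v ∧ T.degree v = 1)) := by
    rw [hu0]; exact Finset.mem_singleton_self u0
  rw [Finset.mem_sdiff] at hu0'
  have hu0d : T.degree u0 = 1 := by
    have := Finset.mem_filter.1 hu0'.1; exact this.2
  have hu0a : ¬ T.Adj a u0 := by
    intro h
    exact hu0'.2 (Finset.mem_filter.2 ⟨Finset.mem_univ _, h, hu0d⟩)
  have hNu0card : (T.neighborFinset u0).card = 1 := by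
    rw [SimpleGraph.card_neighborFinset_eq_degree, hu0d]
  obtain ⟨w0, hw0⟩ := Finset.card_eq_one.1 hNu0card
  have hadj0 : T.Adj u0 w0 := by
    have : w0 ∈ T.neighborFinset u0 := by rw [hw0]; exact Finset.mem_singleton_self _
    simpa using this
  have hw0a : w0 ≠ a := by
    rintro rfl
    exact hu0a hadj0.symm
  have hw0d : T.degree w0 = 2 := by
    have h1 := hspider w0 hw0a
    have h2 := hd1 w0
    by_contra h
    exact hll u0 w0 hadj0 hu0d (by omega)
  -- edge partition
  set W : Sym2 V → ℝ := Sym2.lift ⟨fun x y =>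
      ((T.degree x : ℝ) + l) * ((T.degree y : ℝ) + l), fun x y => by ring⟩
    with hW
  have hGRM : GRM l T = ∑ e ∈ T.edgeFinset, W e := rfl
  have hE0card : (T.edgeFinset.filter (fun e => a ∈ e)).card = Δ := by
    rw [← SimpleGraph.incidenceFinset_eq_filter,
      SimpleGraph.card_incidenceFinset_eq_degree, hdega]
  have hE1img : (T.edgeFinset.filter (fun e => a ∈ e)).filter
        (fun e => ∃ x ∈ e, T.degree x = 1)
      = (Finset.univ.filter (fun v => T.Adj a v ∧ T.degree v = 1)).image
        (fun v => s(a, v)) := by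
    ext e
    induction e using Sym2.ind with
    | _ p q =>
      simp only [Finset.mem_filter, SimpleGraph.mem_edgeFinset,
        SimpleGraph.mem_edgeSet, Sym2.mem_iff, Finset.mem_image,
        Finset.mem_univ, true_and]
      constructor
      · rintro ⟨⟨hpq, (rfl | rfl)⟩, x, (rfl | rfl), hx1⟩
        · omega
        · exact ⟨x, ⟨hpq, hx1⟩, rfl⟩
        · exact ⟨x, ⟨hpq.symm, hx1⟩, Sym2.eq_swap⟩
        · omega
      · rintro ⟨v, ⟨hav, hv1⟩, hve⟩
        rcases Sym2.eq_iff.1 hve with ⟨rfl, rfl⟩ | ⟨rfl, rfl⟩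
        · exact ⟨⟨hav, Or.inl rfl⟩, v, Or.inr rfl, hv1⟩
        · exact ⟨⟨hav.symm, Or.inr rfl⟩, v, Or.inl rfl, hv1⟩
  have hE1card : ((T.edgeFinset.filter (fun e => a ∈ e)).filter
      (fun e => ∃ x ∈ e, T.degree x = 1)).card = Δ - 1 := by
    rw [hE1img, Finset.card_image_of_injective _
      (fun x y h => Sym2.congr_right.1 h), hLNcard]
  have hE2card : ((T.edgeFinset.filter (fun e => a ∈ e)).filter
      (fun e => ¬ ∃ x ∈ e, T.degree x = 1)).card = 1 := by
    have := Finset.card_filter_add_card_filter_not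
      (s := T.edgeFinset.filter (fun e => a ∈ e))
      (p := fun e => ∃ x ∈ e, T.degree x = 1)
    omega
  have hRcard : (T.edgeFinset.filter (fun e => ¬ a ∈ e)).card = n - 1 - Δ := by
    have := Finset.card_filter_add_card_filter_not
      (s := T.edgeFinset) (p := fun e => a ∈ e)
    omega
  have hR1 : (T.edgeFinset.filter (fun e => ¬ a ∈ e)).filter
        (fun e => ∃ x ∈ e, T.degree x = 1) = {s(u0, w0)} := by
    ext e
    induction e using Sym2.ind with
    | _ p q =>
      simp only [Finset.mem_filter, SimpleGraph.mem_edgeFinset,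
        SimpleGraph.mem_edgeSet, Sym2.mem_iff, Finset.mem_singleton, not_or]
      constructor
      · rintro ⟨⟨hpq, hap, haq⟩, x, (rfl | rfl), hx1⟩
        · -- x = p is a leaf
          have hNp := hNleaf x q hpq hx1
          have hpa : ¬ T.Adj a x := by
            intro h
            have : a ∈ T.neighborFinset x := by simpa using h.symm
            rw [hNp] at this
            exact haq (Finset.mem_singleton.1 this)
          have hxm : x ∈ (Finset.univ.filter (fun v => T.degree v = 1))
              \ (Finset.univ.filter (fun v => T.Adj a v ∧ T.degree v = 1)) := by
            rw [Finset.mem_sdiff]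
            constructor
            · exact Finset.mem_filter.2 ⟨Finset.mem_univ _, hx1⟩
            · intro h
              exact hpa (Finset.mem_filter.1 h).2.1
          rw [hu0, Finset.mem_singleton] at hxm
          subst hxm
          have : q ∈ T.neighborFinset x := by simpa using hpq
          rw [hw0, Finset.mem_singleton] at this
          subst this
          rfl
        · -- x = q is a leaf
          have hNq := hNleaf x p hpq.symm hx1
          have hqa : ¬ T.Adj a x := by
            intro h
            have : a ∈ T.neighborFinset x := by simpa using h.symm
            rw [hNq] at this
            exact hap (Finset.mem_singleton.1 this)
          have hxm : x ∈ (Finset.univ.filter (fun v => T.degree v = 1))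
              \ (Finset.univ.filter (fun v => T.Adj a v ∧ T.degree v = 1)) := by
            rw [Finset.mem_sdiff]
            constructor
            · exact Finset.mem_filter.2 ⟨Finset.mem_univ _, hx1⟩
            · intro h
              exact hqa (Finset.mem_filter.1 h).2.1
          rw [hu0, Finset.mem_singleton] at hxm
          subst hxm
          have : p ∈ T.neighborFinset x := by simpa using hpq.symm
          rw [hw0, Finset.mem_singleton] at this
          subst this
          exact Sym2.eq_swap
      · intro h
        rcases Sym2.eq_iff.1 h with ⟨rfl, rfl⟩ | ⟨rfl, rfl⟩
        · refine ⟨⟨hadj0, fun h => ?_, fun h => hw0a h.symm⟩, p, Or.inl rfl, hu0d⟩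
          subst h; omega
        · refine ⟨⟨hadj0.symm, fun h => hw0a h.symm, fun h => ?_⟩, q, Or.inr rfl, hu0d⟩
          subst h; omega
  have hR1card : ((T.edgeFinset.filter (fun e => ¬ a ∈ e)).filter
      (fun e => ∃ x ∈ e, T.degree x = 1)).card = 1 := by
    rw [hR1, Finset.card_singleton]
  have hR2card : ((T.edgeFinset.filter (fun e => ¬ a ∈ e)).filter
      (fun e => ¬ ∃ x ∈ e, T.degree x = 1)).card = n - 1 - Δ - 1 := by
    have := Finset.card_filter_add_card_filter_not
      (s := T.edgeFinset.filter (fun e => ¬ a ∈ e))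
      (p := fun e => ∃ x ∈ e, T.degree x = 1)
    omega
  -- values on each class
  have vE1 : ∀ e ∈ (T.edgeFinset.filter (fun e => a ∈ e)).filter
      (fun e => ∃ x ∈ e, T.degree x = 1),
      W e = ((Δ : ℝ) + l) * (1 + l) := by
    intro e he
    rw [hE1img] at he
    obtain ⟨v, hv, rfl⟩ := Finset.mem_image.1 he
    obtain ⟨-, -, hv1⟩ := Finset.mem_filter.1 hv
    simp only [hW, Sym2.lift_mk, hdega, hv1]
    norm_num
  have vE2 : ∀ e ∈ (T.edgeFinset.filter (fun e => a ∈ e)).filter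
      (fun e => ¬ ∃ x ∈ e, T.degree x = 1),
      W e = ((Δ : ℝ) + l) * (2 + l) := by
    intro e he
    induction e using Sym2.ind with
    | _ p q =>
      simp only [Finset.mem_filter, SimpleGraph.mem_edgeFinset,
        SimpleGraph.mem_edgeSet, Sym2.mem_iff] at he
      obtain ⟨⟨hpq, hape⟩, hnx⟩ := he
      push_neg at hnx
      rcases hape with rfl | rfl
      · have hq2 : T.degree q = 2 := by
          have h1 := hspider q hpq.ne'
          have h2 := hd1 q
          have h3 := hnx q (Or.inr rfl)
          omega
        simp only [hW, Sym2.lift_mk, hdega, hq2]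
        norm_num
      · have hp2 : T.degree p = 2 := by
          have h1 := hspider p hpq.ne
          have h2 := hd1 p
          have h3 := hnx p (Or.inl rfl)
          omega
        simp only [hW, Sym2.lift_mk, hdega, hp2]
        push_cast
        ring
  have vR2 : ∀ e ∈ (T.edgeFinset.filter (fun e => ¬ a ∈ e)).filter
      (fun e => ¬ ∃ x ∈ e, T.degree x = 1),
      W e = (2 + l) * (2 + l) := by
    intro e he
    induction e using Sym2.ind with
    | _ p q =>
      simp only [Finset.mem_filter, SimpleGraph.mem_edgeFinset,
        SimpleGraph.mem_edgeSet, Sym2.mem_iff, not_or] at he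
      obtain ⟨⟨hpq, hap, haq⟩, hnx⟩ := he
      push_neg at hnx
      have hp2 : T.degree p = 2 := by
        have h1 := hspider p (fun h => hap (h.symm))
        have h2 := hd1 p
        have h3 := hnx p (Or.inl rfl)
        omega
      have hq2 : T.degree q = 2 := by
        have h1 := hspider q (fun h => haq (h.symm))
        have h2 := hd1 q
        have h3 := hnx q (Or.inr rfl)
        omega
      simp only [hW, Sym2.lift_mk, hp2, hq2]
      norm_num
  -- assemble the sum
  have expand : ∑ e ∈ T.edgeFinset, W e
      = (((Δ - 1 : ℕ) : ℝ) * (((Δ : ℝ) + l) * (1 + l))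
        + (1 : ℕ) * (((Δ : ℝ) + l) * (2 + l)))
        + ((1 + l) * (2 + l)
          + ((n - 1 - Δ - 1 : ℕ) : ℝ) * ((2 + l) * (2 + l))) := by
    rw [← Finset.sum_filter_add_sum_filter_not T.edgeFinset (fun e => a ∈ e) W]
    congr 1
    · rw [← Finset.sum_filter_add_sum_filter_not
        (T.edgeFinset.filter (fun e => a ∈ e)) (fun e => ∃ x ∈ e, T.degree x = 1) W]
      congr 1
      · rw [Finset.sum_congr rfl vE1, Finset.sum_const, hE1card, nsmul_eq_mul]
      · rw [Finset.sum_congr rfl vE2, Finset.sum_const, hE2card, nsmul_eq_mul]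
    · rw [← Finset.sum_filter_add_sum_filter_not
        (T.edgeFinset.filter (fun e => ¬ a ∈ e))
        (fun e => ∃ x ∈ e, T.degree x = 1) W]
      congr 1
      · rw [hR1, Finset.sum_singleton]
        simp only [hW, Sym2.lift_mk, hu0d, hw0d]
        norm_num
      · rw [Finset.sum_congr rfl vR2, Finset.sum_const, hR2card, nsmul_eq_mul]
  rw [hGRM, expand]
  obtain ⟨m, rfl⟩ : ∃ m, n = Δ + 2 + m := ⟨n - Δ - 2, by omega⟩
  have c1 : ((Δ - 1 : ℕ) : ℝ) = (Δ : ℝ) - 1 := by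
    have : (1 : ℕ) ≤ Δ := by omega
    push_cast [this]
    ring
  have c2 : ((Δ + 2 + m - 1 - Δ - 1 : ℕ) : ℝ) = (m : ℝ) := by
    have : Δ + 2 + m - 1 - Δ - 1 = m := by omega
    rw [this]
  rw [c1, c2]
  push_cast
  ring
end

section
/- Let λ ≥ -1/2 be a real number and let Δ ≥ 3. If T is a tree with n vertices and maximum degree Δ that contains two distinct vertices a and b with deg_T(a) = Δ and deg_T(b) ≥ 3, then there exists a tree T* with n vertices and maximum degree Δ such that GRM_λ(T*) < GRM_λ(T). -/
open SimpleGraph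

section AuxLemmas

variable {V : Type*} [DecidableEq V] {G : SimpleGraph V}

lemma aux_dist_support {v a u : V} (P : G.Walk v a) (hu : u ∈ P.support) (hne : u ≠ v) :
    G.dist u a + 1 ≤ P.length := by
  have hspec := P.take_spec hu
  have hlen : (P.takeUntil u hu).length + (P.dropUntil u hu).length = P.length := by
    rw [← SimpleGraph.Walk.length_append, hspec]
  have h1 : 1 ≤ (P.takeUntil u hu).length := by
    by_contra h
    push_neg at h
    interval_cases h' : (P.takeUntil u hu).length
    · exact hne (SimpleGraph.Walk.eq_of_length_eq_zero h').symm
  have h2 : G.dist u a ≤ (P.dropUntil u hu).length := SimpleGraph.dist_le _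
  omega

lemma aux_step (hc : G.Connected) {v a : V} (h : v ≠ a) :
    ∃ u, G.Adj v u ∧ G.dist u a + 1 = G.dist v a := by
  obtain ⟨P, hP, hlen⟩ := (hc v a).exists_path_of_dist
  have hpos : 0 < G.dist v a := hc.pos_dist_of_ne h
  cases P with
  | nil => exact absurd hpos (by simp)
  | cons hadj P' =>
    rename_i u
    refine ⟨u, hadj, ?_⟩
    have h1 : G.dist u a ≤ P'.length := SimpleGraph.dist_le _
    have h2 : G.dist v a ≤ G.dist u a + 1 := by
      calc G.dist v a ≤ G.dist v u + G.dist u a := hc.dist_triangle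
        _ ≤ 1 + G.dist u a := by
            have : G.dist v u ≤ 1 := by
              simpa using SimpleGraph.dist_le (SimpleGraph.Walk.cons hadj SimpleGraph.Walk.nil)
            omega
        _ = G.dist u a + 1 := by omega
    simp only [SimpleGraph.Walk.length_cons] at hlen
    omega

lemma aux_adj_dist_ne (hc : G.Connected) (hA : G.IsAcyclic) {u v a : V} (h : G.Adj u v) :
    G.dist u a ≠ G.dist v a := by
  intro heq
  obtain ⟨P, hP, hlenP⟩ := (hc v a).exists_path_of_dist
  have huP : u ∉ P.support := by
    intro hu
    have := aux_dist_support P hu h.ne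
    omega
  have hQ : (SimpleGraph.Walk.cons h P).IsPath := hP.cons huP
  obtain ⟨R, hR, hlenR⟩ := (hc u a).exists_path_of_dist
  have hne : (SimpleGraph.Walk.cons h P) ≠ R := by
    intro hcontra
    have : (SimpleGraph.Walk.cons h P).length = R.length := by rw [hcontra]
    simp only [SimpleGraph.Walk.length_cons] at this
    omega
  exact hne (Subtype.mk_eq_mk.mp (hA.path_unique ⟨_, hQ⟩ ⟨R, hR⟩))

lemma aux_unique_closer (hc : G.Connected) (hA : G.IsAcyclic) {u r₁ r₂ a : V}
    (h₁ : G.Adj u r₁) (h₂ : G.Adj u r₂) (hr : r₁ ≠ r₂)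
    (hd₁ : G.dist r₁ a + 1 = G.dist u a) (hd₂ : G.dist r₂ a + 1 = G.dist u a) : False := by
  obtain ⟨P₁, hP₁, hlen₁⟩ := (hc r₁ a).exists_path_of_dist
  obtain ⟨P₂, hP₂, hlen₂⟩ := (hc r₂ a).exists_path_of_dist
  have hu₁ : u ∉ P₁.support := fun hu => by have := aux_dist_support P₁ hu h₁.ne; omega
  have hu₂ : u ∉ P₂.support := fun hu => by have := aux_dist_support P₂ hu h₂.ne; omega
  have hQ₁ : (SimpleGraph.Walk.cons h₁ P₁).IsPath := hP₁.cons hu₁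
  have hQ₂ : (SimpleGraph.Walk.cons h₂ P₂).IsPath := hP₂.cons hu₂
  have heq : (SimpleGraph.Walk.cons h₁ P₁) = (SimpleGraph.Walk.cons h₂ P₂) :=
    Subtype.mk_eq_mk.mp (hA.path_unique ⟨_, hQ₁⟩ ⟨_, hQ₂⟩)
  have hsup : (SimpleGraph.Walk.cons h₁ P₁).support = (SimpleGraph.Walk.cons h₂ P₂).support := by
    rw [heq]
  simp only [SimpleGraph.Walk.support_cons] at hsup
  rw [P₁.support_eq_cons, P₂.support_eq_cons] at hsup
  simp only [List.cons.injEq] at hsup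
  exact hr hsup.2.1

lemma aux_reach_mono {H : SimpleGraph V} (h : ∀ u v, G.Adj u v → H.Reachable u v)
    {u v : V} (hr : G.Reachable u v) : H.Reachable u v := by
  obtain ⟨p⟩ := hr
  induction p with
  | nil => rfl
  | cons ha _ ih => exact (h _ _ ha).trans ih

end AuxLemmas

set_option maxHeartbeats 1600000 in
theorem stmt3 {V : Type*} [Fintype V] (l : ℝ) (hl : -1/2 ≤ l)
    (Δ : ℕ) (hΔ : 3 ≤ Δ) (T : SimpleGraph V) (hT : T.IsTree)
    (hmax : maxDeg T = Δ) (a b : V) (hab : a ≠ b)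
    (ha : deg T a = Δ) (hb : 3 ≤ deg T b) :
    ∃ T' : SimpleGraph V, T'.IsTree ∧ maxDeg T' = Δ ∧ GRM l T' < GRM l T := by
  letI := Classical.decEq V
  letI : DecidableRel T.Adj := Classical.decRel _
  have hmax' : T.maxDegree = Δ := hmax
  have ha' : T.degree a = Δ := ha
  have hb' : 3 ≤ T.degree b := hb
  have hconn : T.Connected := hT.isConnected
  have hA : T.IsAcyclic := hT.2
  -- the set of "big" vertices
  set S : Finset V := Finset.univ.filter (fun v => 3 ≤ T.degree v) with hS
  have hbS : b ∈ S := by simp [hS, hb']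
  obtain ⟨b', hb'S, hb'max⟩ := S.exists_max_image (fun v => T.dist v a) ⟨b, hbS⟩
  simp only [hS, Finset.mem_filter, Finset.mem_univ, true_and] at hb'S
  have hb'max : ∀ v, 3 ≤ T.degree v → T.dist v a ≤ T.dist b' a := by
    intro v hv
    exact hb'max v (by simp [hS, hv])
  set k := T.dist b' a with hk
  have hk1 : 1 ≤ k := by
    have h1 : 1 ≤ T.dist b a := hconn.pos_dist_of_ne (Ne.symm hab)
    have := hb'max b hb'
    omega
  have hb'a : b' ≠ a := by
    intro h; rw [h] at hk; simp [SimpleGraph.dist_self] at hk; omega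
  -- the neighbor towards a
  obtain ⟨w, hwadj, hwdist⟩ := aux_step hconn hb'a
  have hdw : 2 ≤ T.degree w := by
    by_cases hwa : w = a
    · subst hwa; omega
    · obtain ⟨w2, hw2adj, hw2dist⟩ := aux_step hconn hwa
      have hw2b' : w2 ≠ b' := by
        intro h; rw [h] at hw2dist; omega
      have hsub : {b', w2} ⊆ T.neighborFinset w := by
        intro z hz
        simp only [Finset.mem_insert, Finset.mem_singleton] at hz
        rcases hz with rfl | rfl
        · simpa [SimpleGraph.mem_neighborFinset] using hwadj.symm
        · simpa [SimpleGraph.mem_neighborFinset] using hw2adj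
      calc 2 = ({b', w2} : Finset V).card := by rw [Finset.card_insert_of_notMem (by simpa using hw2b'.symm)]; simp
        _ ≤ _ := Finset.card_le_card hsub
  -- choose two further neighbors x c
  have hwmem : w ∈ T.neighborFinset b' := by simpa [SimpleGraph.mem_neighborFinset] using hwadj
  have hcard : 2 ≤ ((T.neighborFinset b').erase w).card := by
    rw [Finset.card_erase_of_mem hwmem]
    have : T.degree b' = (T.neighborFinset b').card := rfl
    omega
  obtain ⟨x, hx⟩ := Finset.card_pos.mp (by omega : 0 < ((T.neighborFinset b').erase w).card)
  have hcard2 : 1 ≤ (((T.neighborFinset b').erase w).erase x).card := by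
    rw [Finset.card_erase_of_mem hx]; omega
  obtain ⟨c, hc⟩ := Finset.card_pos.mp (lt_of_lt_of_le zero_lt_one hcard2)
  obtain ⟨hcx, hc⟩ := Finset.mem_erase.mp hc
  obtain ⟨hcw, hcmem⟩ := Finset.mem_erase.mp hc
  obtain ⟨hxw, hxmem⟩ := Finset.mem_erase.mp hx
  have hxadj : T.Adj b' x := (SimpleGraph.mem_neighborFinset _ _ _).mp hxmem
  have hcadj : T.Adj b' c := (SimpleGraph.mem_neighborFinset _ _ _).mp hcmem
  -- ### chunk 2
  classical
  have hbridge : ∀ u v : V, T.Adj u v → ¬(T.deleteEdges {s(u,v)}).Reachable u v := by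
    intro u v huv
    have hbr := (isAcyclic_iff_forall_adj_isBridge.mp hA) huv
    exact isBridge_iff.mp hbr
  set Tx := T.deleteEdges {s(b', x)} with hTx
  have hxb' : ¬ Tx.Reachable x b' := fun h => hbridge b' x hxadj h.symm
  obtain ⟨Pw, hPw, hPwlen⟩ := (hconn w a).exists_path_of_dist
  have hb'Pw : b' ∉ Pw.support := by
    intro hmem
    have hb'w : b' ≠ w := fun h => T.irrefl (h ▸ hwadj)
    have := aux_dist_support Pw hmem hb'w
    omega
  have hreach_wa : Tx.Reachable w a := by
    refine ⟨Pw.toDeleteEdges _ ?_⟩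
    intro e he hmem
    rw [Set.mem_singleton_iff] at hmem; subst hmem
    exact hb'Pw (Pw.fst_mem_support_of_mem_edges he)
  have hTxb'w : Tx.Adj b' w := by
    rw [hTx, SimpleGraph.deleteEdges_adj]
    refine ⟨hwadj, ?_⟩
    simp only [Set.mem_singleton_iff, Sym2.eq_iff]
    push_neg
    constructor
    · intro _; exact Ne.symm hxw
    · intro h; exact absurd h (fun hh => T.irrefl (hh ▸ hxadj))
  have hreach_b'a : Tx.Reachable b' a := (hTxb'w.reachable).trans hreach_wa
  have hxa : ¬ Tx.Reachable x a := fun h => hxb' (h.trans hreach_b'a.symm)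
  have hBdist : ∀ v, Tx.Reachable x v → k + 1 ≤ T.dist v a := by
    intro v hv
    have hva : ¬ Tx.Reachable v a := fun h => hxa (hv.trans h)
    obtain ⟨P, hP, hPlen⟩ := (hconn v a).exists_path_of_dist
    have hmem : s(b', x) ∈ P.edges := by
      by_contra hnot
      refine hva ⟨P.toDeleteEdges _ ?_⟩
      intro e he hmem
      rw [Set.mem_singleton_iff] at hmem; subst hmem
      exact hnot he
    have hb'P : b' ∈ P.support := P.fst_mem_support_of_mem_edges hmem
    have hvb' : b' ≠ v := by rintro rfl; exact hxb' hv
    have := aux_dist_support P hb'P hvb'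
    omega
  have hBdeg : ∀ v, Tx.Reachable x v → T.degree v ≤ 2 := by
    intro v hv
    by_contra h
    push_neg at h
    have h1 := hb'max v h
    have h2 := hBdist v hv
    omega
  set Bf : Finset V := Finset.univ.filter (fun v => Tx.Reachable x v) with hBf
  have hxBf : x ∈ Bf := by
    simp only [hBf, Finset.mem_filter, Finset.mem_univ, true_and]
    exact Reachable.refl x
  obtain ⟨ℓ, hℓBf, hℓmax0⟩ := Bf.exists_max_image (fun v => T.dist v a) ⟨x, hxBf⟩
  have hℓB : Tx.Reachable x ℓ := by simpa [hBf] using hℓBf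
  have hℓmax : ∀ v, Tx.Reachable x v → T.dist v a ≤ T.dist ℓ a := by
    intro v hv
    exact hℓmax0 v (by simp [hBf, hv])
  have hdistx : T.dist x a = k + 1 := by
    have h1 := hBdist x (Reachable.refl x)
    have h2 : T.dist x a ≤ 1 + k := by
      refine le_trans (hconn.dist_triangle (v := b')) ?_
      have : T.dist x b' ≤ 1 := by
        simpa using SimpleGraph.dist_le (SimpleGraph.Walk.cons hxadj.symm SimpleGraph.Walk.nil)
      omega
    omega
  have hℓb' : ℓ ≠ b' := fun h => hxb' (h ▸ hℓB)
  have hℓdist : k + 1 ≤ T.dist ℓ a := hBdist ℓ hℓB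
  have haℓ : a ≠ ℓ := by
    rintro rfl
    rw [SimpleGraph.dist_self] at hℓdist; omega
  have hnbrB : ∀ r, T.Adj ℓ r → r ≠ b' → Tx.Reachable x r := by
    intro r hr hrb'
    refine hℓB.trans (Adj.reachable ?_)
    rw [hTx, SimpleGraph.deleteEdges_adj]
    refine ⟨hr, ?_⟩
    simp only [Set.mem_singleton_iff, Sym2.eq_iff]
    push_neg
    exact ⟨fun h => absurd h hℓb', fun _ => hrb'⟩
  have hnbr_closer : ∀ r, T.Adj ℓ r → Tx.Reachable x r → T.dist r a + 1 = T.dist ℓ a := by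
    intro r hr hrB
    have h1 := hℓmax r hrB
    have h2 := aux_adj_dist_ne hconn hA hr.symm (a := a)
    have h3 : T.dist ℓ a ≤ 1 + T.dist r a := by
      refine le_trans (hconn.dist_triangle (v := r)) ?_
      have : T.dist ℓ r ≤ 1 := by
        simpa using SimpleGraph.dist_le (SimpleGraph.Walk.cons hr SimpleGraph.Walk.nil)
      omega
    omega
  -- adjacent-to-b' criterion
  have hadjb'_imp : ∀ r, T.Adj ℓ r → r = b' → ℓ = x := by
    intro r hr hrb'
    by_contra hlx
    have hr2 : T.Adj ℓ b' := hrb' ▸ hr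
    have : Tx.Adj ℓ b' := by
      rw [hTx, SimpleGraph.deleteEdges_adj]
      refine ⟨hr2, ?_⟩
      simp only [Set.mem_singleton_iff, Sym2.eq_iff]
      push_neg
      exact ⟨fun h => absurd h hℓb', fun h => absurd h hlx⟩
    exact hxb' (hℓB.trans this.reachable)
  obtain ⟨p, hNℓ, hpcase⟩ : ∃ p, T.neighborFinset ℓ = {p} ∧
      ((p = b' ∧ T.Adj b' ℓ) ∨ (p ≠ b' ∧ T.degree p ≤ 2 ∧ ¬ T.Adj b' ℓ)) := by
    by_cases hlx : ℓ = x
    · refine ⟨b', ?_, Or.inl ⟨rfl, hlx ▸ hxadj⟩⟩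
      have hall : ∀ r, T.Adj ℓ r → r = b' := by
        intro r hr
        by_contra hrne
        have hrB := hnbrB r hr hrne
        have h1 := hnbr_closer r hr hrB
        have h2 := hBdist r hrB
        have h3 : T.dist ℓ a = k + 1 := by rw [hlx]; exact hdistx
        omega
      ext r
      simp only [SimpleGraph.mem_neighborFinset, Finset.mem_singleton]
      constructor
      · exact hall r
      · rintro rfl; exact (hlx ▸ hxadj).symm
    · have hℓnea : ℓ ≠ a := Ne.symm haℓ
      obtain ⟨p, hpadj, hpdist⟩ := aux_step hconn hℓnea
      have hpb' : p ≠ b' := fun h => absurd (hadjb'_imp p hpadj h) hlx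
      have hpB : Tx.Reachable x p := hnbrB p hpadj hpb'
      refine ⟨p, ?_, Or.inr ⟨hpb', hBdeg p hpB, ?_⟩⟩
      · ext r
        simp only [SimpleGraph.mem_neighborFinset, Finset.mem_singleton]
        constructor
        · intro hr
          have hrb' : r ≠ b' := fun h => absurd (hadjb'_imp r hr h) hlx
          have hrB := hnbrB r hr hrb'
          have h1 := hnbr_closer r hr hrB
          by_contra hrp
          exact aux_unique_closer hconn hA hr hpadj hrp h1 hpdist
        · rintro rfl; exact hpadj
      · intro hadj
        exact hlx (hadjb'_imp b' hadj.symm rfl)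
  have hpadj : T.Adj ℓ p := by
    have : p ∈ T.neighborFinset ℓ := by rw [hNℓ]; simp
    exact (SimpleGraph.mem_neighborFinset _ _ _).mp this
  have hdegℓ : T.degree ℓ = 1 := by
    rw [SimpleGraph.degree, hNℓ]; simp
  have hcB : ¬ Tx.Reachable x c := by
    intro h
    have : Tx.Adj c b' := by
      rw [hTx, SimpleGraph.deleteEdges_adj]
      refine ⟨hcadj.symm, ?_⟩
      simp only [Set.mem_singleton_iff, Sym2.eq_iff]
      push_neg
      exact ⟨fun h1 => absurd h1 (fun hh => T.irrefl (hh ▸ hcadj)), fun h1 => absurd h1 hcx⟩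
    exact hxb' (h.trans this.reachable)
  have hℓc : ℓ ≠ c := fun h => hcB (h ▸ hℓB)
  have hpc : p ≠ c := by
    intro h
    rcases hpcase with ⟨h1, _⟩ | ⟨h1, _, _⟩
    · have hcb : c = b' := h.symm.trans h1
      exact T.irrefl (hcb ▸ hcadj)
    · exact hcB (h ▸ hnbrB p hpadj h1)
  have hnadjℓc : ¬ T.Adj ℓ c := by
    intro h
    have : c ∈ T.neighborFinset ℓ := (SimpleGraph.mem_neighborFinset _ _ _).mpr h
    rw [hNℓ] at this
    exact hpc (Finset.mem_singleton.mp this ▸ rfl)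
  have hac : a ≠ c := by
    rintro rfl
    have h1 : T.dist b' a ≤ 1 := by
      simpa using SimpleGraph.dist_le (SimpleGraph.Walk.cons hcadj SimpleGraph.Walk.nil)
    have h2 : T.dist w a = 0 := by omega
    have := (hconn.dist_eq_zero_iff).mp h2
    exact hcw this.symm
  have hab' : a ≠ b' := Ne.symm hb'a
  -- ### chunk 3
  have hK6 : (T.deleteEdges {s(b', c)}).Reachable b' ℓ := by
    obtain ⟨W⟩ := hℓB
    have hWsup : ∀ u, u ∈ W.support → Tx.Reachable x u := fun u hu => ⟨W.takeUntil u hu⟩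
    have hb'W : b' ∉ W.support := fun h => hxb' (hWsup b' h)
    have hWT : ∀ e ∈ W.edges, e ∈ T.edgeSet := by
      intro e he
      have h1 := W.edges_subset_edgeSet he
      rw [hTx, SimpleGraph.edgeSet_deleteEdges] at h1
      exact h1.1
    have hW'del : ∀ e ∈ (W.transfer T hWT).edges, e ∉ ({s(b', c)} : Set (Sym2 V)) := by
      intro e he hmem
      rw [Set.mem_singleton_iff] at hmem
      subst hmem
      rw [SimpleGraph.Walk.edges_transfer] at he
      exact hb'W (SimpleGraph.Walk.fst_mem_support_of_mem_edges W he)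
    have hadjdel : (T.deleteEdges {s(b', c)}).Adj b' x := by
      rw [SimpleGraph.deleteEdges_adj]
      refine ⟨hxadj, ?_⟩
      simp only [Set.mem_singleton_iff, Sym2.eq_iff]
      push_neg
      exact ⟨fun _ => Ne.symm hcx, fun h => absurd h hcadj.ne⟩
    have hWsupeq : (W.transfer T hWT).support = W.support := SimpleGraph.Walk.support_transfer W hWT
    exact ⟨SimpleGraph.Walk.cons hadjdel ((W.transfer T hWT).toDeleteEdges _ hW'del)⟩
  -- the new tree T'
  let T' : SimpleGraph V :=
    { Adj := fun u v => (T.Adj u v ∧ s(u, v) ≠ s(b', c)) ∨ (u = ℓ ∧ v = c) ∨ (u = c ∧ v = ℓ)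
      symm := by
        constructor
        intro u v h
        rcases h with ⟨h1, h2⟩ | ⟨h1, h2⟩ | ⟨h1, h2⟩
        · exact Or.inl ⟨h1.symm, by rwa [Sym2.eq_swap]⟩
        · exact Or.inr (Or.inr ⟨h2, h1⟩)
        · exact Or.inr (Or.inl ⟨h2, h1⟩)
      loopless := by
        constructor
        intro u h
        rcases h with ⟨h1, _⟩ | ⟨h1, h2⟩ | ⟨h1, h2⟩
        · exact T.irrefl h1
        · exact hℓc (h1.symm.trans h2)
        · exact hℓc (h2.symm.trans h1) }
  letI : DecidableRel T'.Adj := Classical.decRel _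
  have hT'adj : ∀ u v, T'.Adj u v ↔
      ((T.Adj u v ∧ s(u, v) ≠ s(b', c)) ∨ (u = ℓ ∧ v = c) ∨ (u = c ∧ v = ℓ)) :=
    fun _ _ => Iff.rfl
  have hNother : ∀ v, v ≠ b' → v ≠ c → v ≠ ℓ → T'.neighborFinset v = T.neighborFinset v := by
    intro v h1 h2 h3
    ext u
    simp only [SimpleGraph.mem_neighborFinset, hT'adj]
    constructor
    · rintro (⟨h, _⟩ | ⟨h4, h5⟩ | ⟨h4, h5⟩)
      · exact h
      · exact absurd h4 h3
      · exact absurd h4 h2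
    · intro h
      refine Or.inl ⟨h, ?_⟩
      simp only [ne_eq, Sym2.eq_iff]
      push_neg
      exact ⟨fun hh => absurd hh h1, fun hh => absurd hh h2⟩
  have hNb' : T'.neighborFinset b' = (T.neighborFinset b').erase c := by
    ext u
    simp only [SimpleGraph.mem_neighborFinset, hT'adj, Finset.mem_erase]
    constructor
    · rintro (⟨h, hne⟩ | ⟨h4, h5⟩ | ⟨h4, h5⟩)
      · refine ⟨fun hu => hne ?_, h⟩
        rw [hu]
      · exact absurd h4 (Ne.symm hℓb')
      · exact absurd h4 hcadj.ne
    · rintro ⟨h1, h2⟩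
      refine Or.inl ⟨h2, ?_⟩
      simp only [ne_eq, Sym2.eq_iff]
      push_neg
      exact ⟨fun _ => h1, fun hh => absurd hh hcadj.ne⟩
  have hNl' : T'.neighborFinset ℓ = {p, c} := by
    ext u
    simp only [SimpleGraph.mem_neighborFinset, hT'adj, Finset.mem_insert, Finset.mem_singleton]
    constructor
    · rintro (⟨h, hne⟩ | ⟨h4, h5⟩ | ⟨h4, h5⟩)
      · left
        have : u ∈ T.neighborFinset ℓ := (SimpleGraph.mem_neighborFinset _ _ _).mpr h
        rw [hNℓ] at this
        exact Finset.mem_singleton.mp this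
      · right; exact h5
      · exact absurd h4 hℓc
    · rintro (rfl | rfl)
      · refine Or.inl ⟨hpadj, ?_⟩
        simp only [ne_eq, Sym2.eq_iff]
        push_neg
        exact ⟨fun hh => absurd hh hℓb', fun hh => absurd hh hℓc⟩
      · right; left; constructor <;> trivial
  have hb'memNc : b' ∈ T.neighborFinset c := (SimpleGraph.mem_neighborFinset _ _ _).mpr hcadj.symm
  have hNc : T'.neighborFinset c = insert ℓ ((T.neighborFinset c).erase b') := by
    ext u
    simp only [SimpleGraph.mem_neighborFinset, hT'adj, Finset.mem_insert, Finset.mem_erase]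
    constructor
    · rintro (⟨h, hne⟩ | ⟨h4, h5⟩ | ⟨h4, h5⟩)
      · right
        refine ⟨fun hu => hne ?_, h⟩
        rw [hu, Sym2.eq_swap]
      · exact absurd h4 (Ne.symm hℓc)
      · left; exact h5
    · rintro (rfl | ⟨h1, h2⟩)
      · right; right; constructor <;> trivial
      · refine Or.inl ⟨h2, ?_⟩
        simp only [ne_eq, Sym2.eq_iff]
        push_neg
        exact ⟨fun hh => absurd hh hcadj.ne', fun _ => h1⟩
  have hdT'b' : T'.degree b' = T.degree b' - 1 := by
    show (T'.neighborFinset b').card = (T.neighborFinset b').card - 1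
    rw [hNb', Finset.card_erase_of_mem hcmem]
  have hdT'ℓ : T'.degree ℓ = 2 := by
    show (T'.neighborFinset ℓ).card = 2
    rw [hNl', Finset.card_insert_of_notMem (by simpa using hpc), Finset.card_singleton]
  have hdT'c : T'.degree c = T.degree c := by
    show (T'.neighborFinset c).card = (T.neighborFinset c).card
    rw [hNc, Finset.card_insert_of_notMem, Finset.card_erase_of_mem hb'memNc]
    · have hpos : 0 < (T.neighborFinset c).card := Finset.card_pos.mpr ⟨b', hb'memNc⟩
      omega
    · intro h
      rw [Finset.mem_erase, SimpleGraph.mem_neighborFinset] at h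
      exact hnadjℓc h.2.symm
  have hdother : ∀ v, v ≠ b' → v ≠ ℓ → T'.degree v = T.degree v := by
    intro v h1 h2
    by_cases h3 : v = c
    · rw [h3]; exact hdT'c
    · show (T'.neighborFinset v).card = (T.neighborFinset v).card
      rw [hNother v h1 h3 h2]
  -- connectivity
  have hTle : T.deleteEdges {s(b', c)} ≤ T' := by
    intro u v h
    rw [SimpleGraph.deleteEdges_adj] at h
    exact Or.inl ⟨h.1, by simpa using h.2⟩
  have hreach_b'c : T'.Reachable b' c := by
    have h1 : T'.Reachable b' ℓ := hK6.mono hTle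
    exact h1.trans (SimpleGraph.Adj.reachable (Or.inr (Or.inl ⟨rfl, rfl⟩)))
  have hT'conn : T'.Connected := by
    rw [connected_iff]
    refine ⟨fun u v => ?_, ⟨a⟩⟩
    refine aux_reach_mono ?_ (hconn u v)
    intro u' v' h
    by_cases he : s(u', v') = s(b', c)
    · rw [Sym2.eq_iff] at he
      rcases he with ⟨rfl, rfl⟩ | ⟨rfl, rfl⟩
      · exact hreach_b'c
      · exact hreach_b'c.symm
    · exact (SimpleGraph.Adj.reachable (Or.inl ⟨h, he⟩ : T'.Adj u' v'))
  -- acyclicity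
  have hT'acyclic : T'.IsAcyclic := by
    intro v0 cw hcw
    by_cases hmem : s(ℓ, c) ∈ cw.edges
    · have hbr : T'.IsBridge s(ℓ, c) := by
        rw [isBridge_iff]
        intro hre
        have hle : (T' \ fromEdgeSet {s(ℓ, c)}) ≤ T.deleteEdges {s(b', c)} := by
          intro u v h
          rw [SimpleGraph.sdiff_adj, SimpleGraph.fromEdgeSet_adj] at h
          obtain ⟨h1, h2⟩ := h
          rcases h1 with ⟨h3, h4⟩ | ⟨h5, h6⟩ | ⟨h5, h6⟩
          · rw [SimpleGraph.deleteEdges_adj]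
            exact ⟨h3, by simpa using h4⟩
          · exact absurd ⟨by rw [h5, h6]; exact rfl, fun hh => hℓc (h5.symm.trans (hh.trans h6))⟩ h2
          · exact absurd ⟨by rw [h5, h6, Sym2.eq_swap]; exact rfl, fun hh => hℓc (h6.symm.trans (hh.symm.trans h5))⟩ h2
        have hre2 := hre.mono hle
        exact hbridge b' c hcadj (hK6.trans hre2)
      exact (hbr.notMem_edges_of_isCycle hcw) hmem
    · have hsub : ∀ e ∈ cw.edges, e ∈ T.edgeSet := by
        intro e he
        have h1 : e ∈ T'.edgeSet := cw.edges_subset_edgeSet he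
        have hne : e ≠ s(ℓ, c) := fun h => hmem (h ▸ he)
        revert h1 hne
        refine Sym2.ind (fun u v => ?_) e
        intro h1 hne
        rw [SimpleGraph.mem_edgeSet] at h1
        rcases h1 with ⟨h3, _⟩ | ⟨h5, h6⟩ | ⟨h5, h6⟩
        · exact h3
        · exact absurd (by rw [h5, h6]) hne
        · exact absurd (by rw [h5, h6, Sym2.eq_swap]) hne
      exact hA (cw.transfer T hsub) (hcw.transfer hsub)
  have hT'tree : T'.IsTree := ⟨hT'conn, hT'acyclic⟩
  -- max degree
  have hdega : T'.degree a = Δ := by rw [hdother a hab' haℓ, ha']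
  have hdmax : ∀ v, T.degree v ≤ Δ := by
    intro v
    have := T.degree_le_maxDegree v
    omega
  have hdle : ∀ v, T'.degree v ≤ Δ := by
    intro v
    by_cases h1 : v = b'
    · rw [h1, hdT'b']
      have := hdmax b'
      omega
    · by_cases h2 : v = ℓ
      · rw [h2, hdT'ℓ]; omega
      · rw [hdother v h1 h2]; exact hdmax v
  have hmaxT' : T'.maxDegree = Δ := by
    refine le_antisymm (T'.maxDegree_le_of_forall_degree_le Δ hdle) ?_
    rw [← hdega]
    exact T'.degree_le_maxDegree a
  -- ### chunk 4 : GRM computation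
  set fT : Sym2 V → ℝ := Sym2.lift ⟨fun u v => ((T.degree u : ℝ) + l) * ((T.degree v : ℝ) + l),
    fun u v => by ring⟩ with hfT
  set fT' : Sym2 V → ℝ := Sym2.lift ⟨fun u v => ((T'.degree u : ℝ) + l) * ((T'.degree v : ℝ) + l),
    fun u v => by ring⟩ with hfT'
  have hfTmk : ∀ u v : V, fT s(u, v) = ((T.degree u : ℝ) + l) * ((T.degree v : ℝ) + l) :=
    fun u v => rfl
  have hfT'mk : ∀ u v : V, fT' s(u, v) = ((T'.degree u : ℝ) + l) * ((T'.degree v : ℝ) + l) :=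
    fun u v => rfl
  have hgoal : ∑ e ∈ T'.edgeFinset, fT' e < ∑ e ∈ T.edgeFinset, fT e := by
    have he0mem : s(b', c) ∈ T.edgeFinset := by
      rw [SimpleGraph.mem_edgeFinset, SimpleGraph.mem_edgeSet]; exact hcadj
    have he1notmem : s(ℓ, c) ∉ T.edgeFinset := by
      rw [SimpleGraph.mem_edgeFinset, SimpleGraph.mem_edgeSet]; exact hnadjℓc
    have hE' : T'.edgeFinset = insert s(ℓ, c) (T.edgeFinset.erase s(b', c)) := by
      ext e
      refine Sym2.ind (fun u v => ?_) e
      simp only [SimpleGraph.mem_edgeFinset, Finset.mem_insert, Finset.mem_erase,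
        SimpleGraph.mem_edgeSet, hT'adj, ne_eq]
      constructor
      · rintro (⟨h1, h2⟩ | ⟨rfl, rfl⟩ | ⟨rfl, rfl⟩)
        · right; exact ⟨h2, h1⟩
        · left; rfl
        · left; exact Sym2.eq_swap
      · rintro (h | ⟨h1, h2⟩)
        · rw [Sym2.eq_iff] at h
          rcases h with ⟨rfl, rfl⟩ | ⟨rfl, rfl⟩
          · right; left; exact ⟨rfl, rfl⟩
          · right; right; exact ⟨rfl, rfl⟩
        · exact Or.inl ⟨h2, h1⟩
    set F := T.edgeFinset.erase s(b', c) with hF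
    have hsum_main : ∑ e ∈ T.edgeFinset, fT e = (∑ e ∈ F, fT e) + fT s(b', c) := by
      rw [hF, Finset.sum_erase_add _ _ he0mem]
    have he1F : s(ℓ, c) ∉ F := fun h => he1notmem (Finset.mem_of_mem_erase h)
    have hsum'_main : ∑ e ∈ T'.edgeFinset, fT' e = (∑ e ∈ F, fT' e) + fT' s(ℓ, c) := by
      rw [hE', Finset.sum_insert he1F, add_comm]
    set Nbc := (T.neighborFinset b').erase c with hNbc
    have hwNbc : w ∈ Nbc := Finset.mem_erase.mpr ⟨Ne.symm hcw, hwmem⟩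
    have hNbc_adj : ∀ y ∈ Nbc, T.Adj b' y := by
      intro y hy
      exact (SimpleGraph.mem_neighborFinset _ _ _).mp (Finset.mem_of_mem_erase hy)
    have hNbc_deg1 : ∀ y ∈ Nbc, 1 ≤ T.degree y := by
      intro y hy
      have : b' ∈ T.neighborFinset y :=
        (SimpleGraph.mem_neighborFinset _ _ _).mpr (hNbc_adj y hy).symm
      exact Finset.card_pos.mpr ⟨b', this⟩
    have hNbc_card : Nbc.card = T.degree b' - 1 := Finset.card_erase_of_mem hcmem
    have hinj : ∀ y ∈ Nbc, ∀ z ∈ Nbc, s(b', y) = s(b', z) → y = z := by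
      intro y hy z hz h
      rw [Sym2.eq_iff] at h
      rcases h with ⟨_, h2⟩ | ⟨h1, h2⟩
      · exact h2
      · exact absurd h1 (hNbc_adj z hz).ne
    set S0 := Nbc.image (fun y => s(b', y)) with hS0
    have hS0F : S0 ⊆ F := by
      intro e he
      rw [hS0, Finset.mem_image] at he
      obtain ⟨y, hy, rfl⟩ := he
      rw [hF, Finset.mem_erase]
      constructor
      · intro h
        rw [Sym2.eq_iff] at h
        rcases h with ⟨_, h2⟩ | ⟨h1, _⟩
        · exact (Finset.mem_erase.mp hy).1 h2
        · exact hcadj.ne h1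
      · rw [SimpleGraph.mem_edgeFinset, SimpleGraph.mem_edgeSet]
        exact hNbc_adj y hy
    have hS0sum : ∑ e ∈ S0, (fT e - fT' e)
        = ∑ y ∈ Nbc, (fT s(b', y) - fT' s(b', y)) := by
      rw [hS0]
      exact Finset.sum_image hinj
    have hpℓ : p ≠ ℓ := hpadj.ne'
    -- the b'-incident term rewrite, for y ≠ ℓ
    have hDcast : ((T'.degree b' : ℝ)) = (T.degree b' : ℝ) - 1 := by
      rw [hdT'b', Nat.cast_sub (by omega)]
      norm_num
    have hterm : ∀ y ∈ Nbc, y ≠ ℓ → fT s(b', y) - fT' s(b', y) = ((T.degree y : ℝ) + l) := by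
      intro y hy hyl
      rw [hfTmk, hfT'mk, hDcast, hdother y (hNbc_adj y hy).ne' hyl]
      ring
    -- lower bound for sums of degrees
    have hsum_lb : ∀ (M : Finset V), M ⊆ Nbc → w ∈ M →
        ((T.degree w : ℝ) + l) + ((M.card : ℝ) - 1) * (1 + l)
          ≤ ∑ y ∈ M, ((T.degree y : ℝ) + l) := by
      intro M hM hwM
      rw [← Finset.add_sum_erase _ _ hwM]
      have h1 : ∀ y ∈ M.erase w, (1 : ℝ) + l ≤ ((T.degree y : ℝ) + l) := by
        intro y hy
        have := hNbc_deg1 y (hM (Finset.mem_of_mem_erase hy))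
        have : (1 : ℝ) ≤ (T.degree y : ℝ) := by exact_mod_cast this
        linarith
      have h2 := Finset.card_nsmul_le_sum (M.erase w) _ _ h1
      rw [nsmul_eq_mul] at h2
      rw [Finset.card_erase_of_mem hwM] at h2
      have h3 : ((M.card - 1 : ℕ) : ℝ) = (M.card : ℝ) - 1 := by
        have : 1 ≤ M.card := Finset.card_pos.mpr ⟨w, hwM⟩
        push_cast [Nat.cast_sub this]
        ring
      rw [h3] at h2
      linarith
    -- real abbreviations
    have hD3 : (3 : ℝ) ≤ (T.degree b' : ℝ) := by exact_mod_cast hb'S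
    have hdc1 : (1 : ℝ) ≤ (T.degree c : ℝ) := by
      have : b' ∈ T.neighborFinset c := hb'memNc
      have h1 : 1 ≤ T.degree c := Finset.card_pos.mpr ⟨b', this⟩
      exact_mod_cast h1
    have hdw2 : (2 : ℝ) ≤ (T.degree w : ℝ) := by exact_mod_cast hdw
    have he0val : fT s(b', c) = ((T.degree b' : ℝ) + l) * ((T.degree c : ℝ) + l) := hfTmk _ _
    have he1val : fT' s(ℓ, c) = (2 + l) * ((T.degree c : ℝ) + l) := by
      rw [hfT'mk, hdT'ℓ, hdT'c]
      norm_num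
    have hanalyze : ∀ u v : V, T.Adj u v → s(u, v) ≠ s(b', c) → s(u, v) ∉ S0 →
        s(u, v) ≠ s(ℓ, p) → u ≠ b' ∧ v ≠ b' ∧ u ≠ ℓ ∧ v ≠ ℓ := by
      intro u v hadj hne0 hneS0 hne2
      refine ⟨?_, ?_, ?_, ?_⟩
      · intro h
        subst h
        refine hneS0 (Finset.mem_image_of_mem _ (Finset.mem_erase.mpr ⟨?_, ?_⟩))
        · intro hvc
          exact hne0 (by rw [hvc])
        · exact (SimpleGraph.mem_neighborFinset _ _ _).mpr hadj
      · intro h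
        subst h
        refine hneS0 ?_
        rw [Sym2.eq_swap]
        refine Finset.mem_image_of_mem _ (Finset.mem_erase.mpr ⟨?_, ?_⟩)
        · intro huc
          exact hne0 (by rw [huc, Sym2.eq_swap])
        · exact (SimpleGraph.mem_neighborFinset _ _ _).mpr hadj.symm
      · intro h
        subst h
        have : v ∈ T.neighborFinset u := (SimpleGraph.mem_neighborFinset _ _ _).mpr hadj
        rw [hNℓ, Finset.mem_singleton] at this
        exact hne2 (by rw [this])
      · intro h
        subst h
        have : u ∈ T.neighborFinset v := (SimpleGraph.mem_neighborFinset _ _ _).mpr hadj.symm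
        rw [hNℓ, Finset.mem_singleton] at this
        exact hne2 (by rw [this, Sym2.eq_swap])
    have hkey0 : ∑ e ∈ T.edgeFinset, fT e - ∑ e ∈ T'.edgeFinset, fT' e
        = (∑ e ∈ F, (fT e - fT' e)) + fT s(b', c) - fT' s(ℓ, c) := by
      rw [hsum_main, hsum'_main, Finset.sum_sub_distrib]
      ring
    rcases hpcase with ⟨hpb', hadjb'ℓ⟩ | ⟨hpb', hdegp, hnadjb'ℓ⟩
    · -- CASE B : p = b', ℓ is adjacent to b'
      have hℓNbc : ℓ ∈ Nbc := Finset.mem_erase.mpr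
        ⟨hℓc, (SimpleGraph.mem_neighborFinset _ _ _).mpr hadjb'ℓ⟩
      have hvanish : ∀ e ∈ F, e ∉ S0 → fT e - fT' e = 0 := by
        intro e
        induction e using Sym2.ind with
        | _ u v =>
          intro heF heS
          obtain ⟨h2, h1⟩ := Finset.mem_erase.mp heF
          rw [SimpleGraph.mem_edgeFinset, SimpleGraph.mem_edgeSet] at h1
          have hne2 : s(u, v) ≠ s(ℓ, p) := by
            intro h
            refine heS ?_
            rw [h, hpb', Sym2.eq_swap]
            exact Finset.mem_image_of_mem _ hℓNbc
          obtain ⟨hub, hvb, hul, hvl⟩ := hanalyze u v h1 h2 heS hne2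
          rw [hfTmk, hfT'mk, hdother u hub hul, hdother v hvb hvl]
          ring
      have hsumF : ∑ e ∈ F, (fT e - fT' e) = ∑ e ∈ S0, (fT e - fT' e) :=
        (Finset.sum_subset hS0F hvanish).symm
      have hterml : fT s(b', ℓ) - fT' s(b', ℓ)
          = ((T.degree b' : ℝ) + l) * (1 + l) - ((T.degree b' : ℝ) - 1 + l) * (2 + l) := by
        rw [hfTmk, hfT'mk, hDcast, hdegℓ, hdT'ℓ]
        norm_num
      have hwl : w ≠ ℓ := by
        intro h
        rw [h, hdegℓ] at hdw
        omega
      have hsplit : ∑ y ∈ Nbc, (fT s(b', y) - fT' s(b', y))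
          = (fT s(b', ℓ) - fT' s(b', ℓ)) + ∑ y ∈ Nbc.erase ℓ, ((T.degree y : ℝ) + l) := by
        rw [← Finset.add_sum_erase _ _ hℓNbc]
        congr 1
        refine Finset.sum_congr rfl ?_
        intro y hy
        exact hterm y (Finset.mem_of_mem_erase hy) (Finset.ne_of_mem_erase hy)
      have hwmem2 : w ∈ Nbc.erase ℓ := Finset.mem_erase.mpr ⟨hwl, hwNbc⟩
      have hcard' : (Nbc.erase ℓ).card = T.degree b' - 2 := by
        rw [Finset.card_erase_of_mem hℓNbc, hNbc_card]
        omega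
      have hlb := hsum_lb (Nbc.erase ℓ) (Finset.erase_subset _ _) hwmem2
      rw [hcard'] at hlb
      have hcast2 : ((T.degree b' - 2 : ℕ) : ℝ) = (T.degree b' : ℝ) - 2 := by
        rw [Nat.cast_sub (by omega)]
        norm_num
      rw [hcast2] at hlb
      have hdiff : 0 < ∑ e ∈ T.edgeFinset, fT e - ∑ e ∈ T'.edgeFinset, fT' e := by
        rw [hkey0, hsumF, hS0sum, hsplit, hterml, he0val, he1val]
        nlinarith [mul_le_mul_of_nonneg_left
            (by linarith : (1:ℝ) + l ≤ (T.degree c : ℝ) + l)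
            (by linarith : (0:ℝ) ≤ (T.degree b' : ℝ) - 2),
          mul_nonneg (by linarith : (0:ℝ) ≤ 2*l+1) (by linarith : (0:ℝ) ≤ (T.degree b' : ℝ) - 3)]
      linarith
    · -- CASE A : p ≠ b'
      have hℓp_F : s(ℓ, p) ∈ F := by
        rw [hF, Finset.mem_erase]
        constructor
        · intro h
          rw [Sym2.eq_iff] at h
          rcases h with ⟨h1, _⟩ | ⟨h1, _⟩
          · exact hℓb' h1
          · exact hℓc h1
        · rw [SimpleGraph.mem_edgeFinset, SimpleGraph.mem_edgeSet]
          exact hpadj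
      have hℓp_S0 : s(ℓ, p) ∉ S0 := by
        intro h
        rw [hS0, Finset.mem_image] at h
        obtain ⟨y, hy, hh⟩ := h
        rw [Sym2.eq_iff] at hh
        rcases hh with ⟨h1, _⟩ | ⟨h1, _⟩
        · exact hℓb' h1.symm
        · exact hpb' h1.symm
      set S : Finset (Sym2 V) := insert s(ℓ, p) S0 with hSdef
      have hSF : S ⊆ F := by
        intro e he
        rw [hSdef, Finset.mem_insert] at he
        rcases he with rfl | he
        · exact hℓp_F
        · exact hS0F he
      have hvanish : ∀ e ∈ F, e ∉ S → fT e - fT' e = 0 := by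
        intro e
        induction e using Sym2.ind with
        | _ u v =>
          intro heF heS
          rw [hSdef, Finset.mem_insert] at heS
          push_neg at heS
          obtain ⟨h2, h1⟩ := Finset.mem_erase.mp heF
          rw [SimpleGraph.mem_edgeFinset, SimpleGraph.mem_edgeSet] at h1
          obtain ⟨hub, hvb, hul, hvl⟩ := hanalyze u v h1 h2 heS.2 heS.1
          rw [hfTmk, hfT'mk, hdother u hub hul, hdother v hvb hvl]
          ring
      have hsumF : ∑ e ∈ F, (fT e - fT' e) = ∑ e ∈ S, (fT e - fT' e) :=
        (Finset.sum_subset hSF hvanish).symm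
      have hsumS : ∑ e ∈ S, (fT e - fT' e)
          = (fT s(ℓ, p) - fT' s(ℓ, p)) + ∑ e ∈ S0, (fT e - fT' e) := by
        rw [hSdef, Finset.sum_insert hℓp_S0]
      have htermp : fT s(ℓ, p) - fT' s(ℓ, p) = -((T.degree p : ℝ) + l) := by
        rw [hfTmk, hfT'mk, hdegℓ, hdT'ℓ, hdother p hpb' hpℓ]
        push_cast
        ring
      have hℓNbc : ℓ ∉ Nbc := by
        intro h
        exact hnadjb'ℓ (hNbc_adj ℓ h)
      have hsplit : ∑ y ∈ Nbc, (fT s(b', y) - fT' s(b', y))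
          = ∑ y ∈ Nbc, ((T.degree y : ℝ) + l) := by
        refine Finset.sum_congr rfl ?_
        intro y hy
        exact hterm y hy (fun h => hℓNbc (h ▸ hy))
      have hlb := hsum_lb Nbc (subset_refl _) hwNbc
      rw [hNbc_card] at hlb
      have hcast2 : ((T.degree b' - 1 : ℕ) : ℝ) = (T.degree b' : ℝ) - 1 := by
        rw [Nat.cast_sub (by omega)]
        norm_num
      rw [hcast2] at hlb
      have hdp2 : (T.degree p : ℝ) ≤ 2 := by exact_mod_cast hdegp
      have hdiff : 0 < ∑ e ∈ T.edgeFinset, fT e - ∑ e ∈ T'.edgeFinset, fT' e := by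
        rw [hkey0, hsumF, hsumS, hS0sum, hsplit, htermp, he0val, he1val]
        nlinarith [mul_le_mul_of_nonneg_left
            (by linarith : (1:ℝ) + l ≤ (T.degree c : ℝ) + l)
            (by linarith : (0:ℝ) ≤ (T.degree b' : ℝ) - 2),
          mul_nonneg (by linarith : (0:ℝ) ≤ 2*l+1) (by linarith : (0:ℝ) ≤ (T.degree b' : ℝ) - 3)]
      linarith
  refine ⟨T', hT'tree, ?_, ?_⟩
  · exact hmaxT'
  · show (∑ e ∈ T'.edgeFinset,
      Sym2.lift ⟨fun u v => ((T'.degree u : ℝ) + l) * ((T'.degree v : ℝ) + l),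
        fun u v => by ring⟩ e) < ∑ e ∈ T.edgeFinset,
      Sym2.lift ⟨fun u v => ((T.degree u : ℝ) + l) * ((T.degree v : ℝ) + l),
        fun u v => by ring⟩ e
    exact hgoal
end

section
/- Let λ ≥ -1/2 be a real number and let Δ ≥ 3. If T is a spider tree with n vertices and maximum degree Δ whose center has at least two legs of length greater than one (equivalently, the center has at least two neighbors of degree two), then there exists a spider tree T* with n vertices and maximum degree Δ such that GRM_λ(T*) < GRM_λ(T). -/
open SimpleGraph

lemma deg_eq {V : Type*} [Fintype V] [DecidableEq V] (G : SimpleGraph V) [DecidableRel G.Adj]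
    (v : V) : deg G v = G.degree v := by
  unfold deg; congr!

lemma maxDeg_eq {V : Type*} [Fintype V] [DecidableEq V] (G : SimpleGraph V) [DecidableRel G.Adj] :
    maxDeg G = G.maxDegree := by
  unfold maxDeg SimpleGraph.maxDegree
  congr!

lemma GRM_eq {V : Type*} [Fintype V] [DecidableEq V] (l : ℝ) (G : SimpleGraph V)
    [DecidableRel G.Adj] [Fintype G.edgeSet] :
    GRM l G = ∑ e ∈ G.edgeFinset,
      Sym2.lift ⟨fun a b => ((G.degree a : ℝ) + l) * ((G.degree b : ℝ) + l),
        fun a b => by ring⟩ e := by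
  unfold GRM
  congr!

lemma path_first_edge {V : Type*} {G : SimpleGraph V} {u v b : V} (r : G.Walk u v)
    (hr : r.IsPath) (he : s(u, b) ∈ r.edges) :
    ∃ (h : G.Adj u b) (r' : G.Walk b v), r = Walk.cons h r' := by
  induction r with
  | nil => simp at he
  | @cons u m v h' r' ih =>
    rw [Walk.edges_cons, List.mem_cons] at he
    rcases he with he | he
    · rw [Sym2.eq_iff] at he
      rcases he with ⟨-, rfl⟩ | ⟨rfl, rfl⟩
      · exact ⟨h', r', rfl⟩
      · exact absurd h' G.irrefl
    · exact absurd (Walk.fst_mem_support_of_mem_edges r' he)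
        ((Walk.cons_isPath_iff h' r').mp hr).2

/-- Two-sides lemma: after deleting the edge `s(u1,u2)`, every vertex reachable
from `u` remains reachable from `a` or from `u2`. -/
lemma reach_side {V : Type*} {G : SimpleGraph V} {a u1 u2 : V}
    (ha1 : G.Adj a u1) (ha2 : a ≠ u2) :
    ∀ {u v : V} (_ : G.Walk u v),
      ((G.deleteEdges {s(u1, u2)}).Reachable a u ∨ (G.deleteEdges {s(u1, u2)}).Reachable u2 u) →
      ((G.deleteEdges {s(u1, u2)}).Reachable a v ∨ (G.deleteEdges {s(u1, u2)}).Reachable u2 v) := by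
  intro u v p
  induction p with
  | nil => exact id
  | @cons u m v h q ih =>
    intro hu
    apply ih
    by_cases hend : s(u, m) = s(u1, u2)
    · rw [Sym2.eq_iff] at hend
      rcases hend with ⟨he1, he2⟩ | ⟨he1, he2⟩
      · right; rw [he2]
      · rw [he2]; left
        have : (G.deleteEdges {s(u1, u2)}).Adj a u1 := by
          rw [SimpleGraph.deleteEdges_adj]
          refine ⟨ha1, ?_⟩
          simp only [Set.mem_singleton_iff, Sym2.eq_iff]
          rintro (⟨g1, g2⟩ | ⟨g1, g2⟩)
          · exact ha2 (g1.trans g2)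
          · exact ha2 g1
        exact this.reachable
    · have hadj : (G.deleteEdges {s(u1, u2)}).Adj u m := by
        rw [SimpleGraph.deleteEdges_adj]
        exact ⟨h, by simpa using hend⟩
      rcases hu with h1 | h1
      · exact Or.inl (h1.trans hadj.reachable)
      · exact Or.inr (h1.trans hadj.reachable)

/-- In a tree, a vertex at maximum distance from `a` has at most one neighbor. -/
lemma max_dist_leaf {V : Type*} {G : SimpleGraph V} (hT : G.IsTree) (a w : V)
    (hmax : ∀ v, G.dist a v ≤ G.dist a w) :
    ∀ y z, G.Adj w y → G.Adj w z → y = z := by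
  classical
  have hconn := hT.isConnected
  have hacyc := ((isTree_iff _).mp hT).2
  by_cases haw : w = a
  · subst haw
    intro y z hy hz
    have h0 : G.dist w w = 0 := by simp
    have hy0 : G.dist w y = 0 := by have := hmax y; omega
    have hy' : y = w := by
      rcases (SimpleGraph.dist_eq_zero_iff_eq_or_not_reachable.mp hy0) with h | h
      · exact h.symm
      · exact absurd (hconn w y) h
    exact absurd (hy' ▸ hy) G.irrefl
  · obtain ⟨p, hp, hplen⟩ := hconn.exists_path_of_dist a w
    have key : ∀ y, G.Adj w y → p.support.dropLast.getLast? = some y := by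
      intro y hy
      -- y is on the path
      have hmem : y ∈ p.support := by
        by_contra hys
        have hrev : (p.concat hy).reverse = Walk.cons hy.symm p.reverse :=
          Walk.reverse_concat p hy
        have hp' : (p.concat hy).IsPath := by
          rw [← Walk.isPath_reverse_iff, hrev, Walk.cons_isPath_iff]
          exact ⟨hp.reverse, by rwa [Walk.support_reverse, List.mem_reverse]⟩
        have hlen' : (p.concat hy).length = p.length + 1 := Walk.length_concat p hy
        obtain ⟨p0, hp0, hp0len⟩ := hconn.exists_path_of_dist a y
        have heq := (hT.existsUnique_path a y).unique hp' hp0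
        have hply : G.dist a y ≤ G.dist a w := hmax y
        rw [heq] at hlen'
        omega
      have hyw : y ≠ w := hy.ne'
      have hq1path : (p.dropUntil y hmem).IsPath := hp.dropUntil hmem
      have hq1nnil : ¬ (p.dropUntil y hmem).Nil := Walk.not_nil_of_ne hyw
      have hq1pos : 0 < (p.dropUntil y hmem).length := Walk.not_nil_iff_lt_length.mp hq1nnil
      have hq1len : (p.dropUntil y hmem).length = 1 := by
        by_contra hne
        have h2 : 2 ≤ (p.dropUntil y hmem).length := by omega
        have hcyc : (Walk.cons hy (p.dropUntil y hmem)).IsCycle := by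
          rw [Walk.cons_isCycle_iff]
          refine ⟨hq1path, fun hmem' => ?_⟩
          have hmem'' : s(w, y) ∈ (p.dropUntil y hmem).reverse.edges := by
            rwa [Walk.edges_reverse, List.mem_reverse]
          obtain ⟨h, r', hr'⟩ := path_first_edge _ hq1path.reverse hmem''
          have hr'path : r'.IsPath := by
            have := hq1path.reverse
            rw [hr'] at this
            exact this.of_cons
          have hr'nil : r' = Walk.nil := (Walk.isPath_iff_eq_nil (p := r')).mp hr'path
          have : (p.dropUntil y hmem).reverse.length = 1 := by
            rw [hr', hr'nil]; simp
          rw [Walk.length_reverse] at this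
          omega
        exact hacyc _ hcyc
      -- decompose the length-1 tail
      obtain ⟨m, hm, q1', hq1'⟩ := Walk.not_nil_iff.mp hq1nnil
      have hq1'len : q1'.length = 0 := by
        have := congrArg Walk.length hq1'
        rw [Walk.length_cons] at this
        omega
      have hq1'nil : q1'.Nil := Walk.nil_iff_length_eq.mpr hq1'len
      have hmw : m = w := hq1'nil.eq
      have hq1'supp : q1'.support = [m] := Walk.nil_iff_support_eq.mp hq1'nil
      have htail : (p.dropUntil y hmem).support.tail = [w] := by
        rw [hq1', Walk.support_cons]
        simp [hq1'supp, hmw]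
      have hsplit : p.support = (p.takeUntil y hmem).support ++ [w] := by
        conv_lhs => rw [← Walk.take_spec p hmem]
        rw [Walk.support_append, htail]
      rw [hsplit, List.dropLast_concat,
        List.getLast?_eq_getLast (Walk.support_ne_nil _), Walk.getLast_support]
    intro y z hy hz
    have := (key y hy).symm.trans (key z hz)
    exact Option.some_injective _ this

theorem stmt4 {V : Type*} [Fintype V] (l : ℝ) (hl : -1/2 ≤ l)
    (Δ : ℕ) (hΔ : 3 ≤ Δ) (T : SimpleGraph V) (hT : T.IsTree)
    (hmax : maxDeg T = Δ) (a : V) (hdega : deg T a = Δ)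
    (hspider : ∀ v : V, v ≠ a → deg T v ≤ 2)
    (hlegs : 2 ≤ {v : V | T.Adj a v ∧ deg T v = 2}.ncard) :
    ∃ T' : SimpleGraph V, T'.IsTree ∧
      (∃ a' : V, ∀ v : V, v ≠ a' → deg T' v ≤ 2) ∧
      maxDeg T' = Δ ∧ GRM l T' < GRM l T := by
  classical
  have hconn := hT.isConnected
  have hacyc := ((isTree_iff _).mp hT).2
  simp only [deg_eq] at hdega hspider hlegs
  -- two distinct degree-2 neighbors of a
  obtain ⟨m1, m2, hm1, hm2, hm12⟩ := (Set.one_lt_ncard_iff (Set.toFinite _)).mp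
    (by omega : 1 < {v : V | T.Adj a v ∧ T.degree v = 2}.ncard)
  simp only [Set.mem_setOf_eq] at hm1 hm2
  -- the "other neighbor" of a degree-2 neighbor of a
  have otherNbr : ∀ v, T.Adj a v → T.degree v = 2 →
      ∃ z, z ≠ a ∧ T.Adj v z ∧ ∀ y, T.Adj v y → y = a ∨ y = z := by
    intro v hav hdv
    obtain ⟨x, y, hxy, hxyeq⟩ := Finset.card_eq_two.mp hdv
    have hmem : ∀ u, T.Adj v u ↔ u = x ∨ u = y := by
      intro u
      rw [← mem_neighborFinset, hxyeq]
      simp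
    have ha' : a = x ∨ a = y := (hmem a).mp hav.symm
    rcases ha' with rfl | rfl
    · exact ⟨y, fun h => hxy h.symm, (hmem y).mpr (Or.inr rfl),
        fun u hu => ((hmem u).mp hu).imp id id⟩
    · refine ⟨x, fun h => hxy h, (hmem x).mpr (Or.inl rfl), fun u hu => ?_⟩
      rcases (hmem u).mp hu with h | h
      · exact Or.inr h
      · exact Or.inl h
  -- distance-2 vertices exist
  have distTwo : ∀ v z, T.Adj a v → T.Adj v z → z ≠ a → 2 ≤ T.dist a z := by
    intro v z hav hvz hza
    have hne : T.dist a z ≠ 0 := by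
      rw [SimpleGraph.dist_ne_zero_iff_ne_and_reachable]
      exact ⟨fun h => hza h.symm, hconn a z⟩
    have hne1 : T.dist a z ≠ 1 := by
      intro h1
      have haz : T.Adj a z := SimpleGraph.dist_eq_one_iff_adj.mp h1
      have hvza : z ≠ v := fun h => T.irrefl (h ▸ hvz)
      have hcyc : (Walk.cons hav (Walk.cons hvz (Walk.cons haz.symm Walk.nil))).IsCycle := by
        rw [Walk.cons_isCycle_iff]
        constructor
        · rw [Walk.cons_isPath_iff]
          refine ⟨?_, ?_⟩
          · rw [Walk.cons_isPath_iff]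
            exact ⟨Walk.IsPath.nil, by simp [hza]⟩
          · simp [hvz.ne, hav.ne']
        · simp only [Walk.edges_cons, Walk.edges_nil, List.mem_cons, List.not_mem_nil,
            or_false]
          rintro (h | h) <;> rw [Sym2.eq_iff] at h <;>
            rcases h with ⟨h1, h2⟩ | ⟨h1, h2⟩
          · exact hav.ne h1
          · exact hza h1.symm
          · exact hza h1.symm
          · exact hvza h2.symm
      exact hacyc _ hcyc
    omega

  -- the farthest vertex w from a
  obtain ⟨w, -, hwmax'⟩ := Finset.exists_max_image Finset.univ (fun v => T.dist a v)
    ⟨a, Finset.mem_univ a⟩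
  have hwmax : ∀ v, T.dist a v ≤ T.dist a w := fun v => hwmax' v (Finset.mem_univ v)
  -- distance at least 2
  obtain ⟨z1, hz1a, hz1adj, -⟩ := otherNbr m1 hm1.1 hm1.2
  have hM2 : 2 ≤ T.dist a w := le_trans (distTwo m1 z1 hm1.1 hz1adj hz1a) (hwmax z1)
  have hwa : w ≠ a := by
    intro h
    have h0 : T.dist a w = 0 := by rw [h]; exact SimpleGraph.dist_self
    omega
  have hnadjaw : ¬ T.Adj a w := by
    intro h
    have : T.dist a w = 1 := SimpleGraph.dist_eq_one_iff_adj.mpr h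
    omega
  -- w is a leaf with unique neighbor x
  have hleaf := max_dist_leaf hT a w hwmax
  obtain ⟨p, hp, hplen⟩ := hconn.exists_path_of_dist a w
  have hpnnil : ¬ p.Nil := by
    rw [Walk.not_nil_iff_lt_length]
    omega
  obtain ⟨x, hwxadj, pr', hpr'⟩ := Walk.not_nil_iff.mp
    (Walk.not_nil_of_ne hwa : ¬ p.reverse.Nil)
  have hNw : ∀ y, T.Adj w y ↔ y = x := by
    intro y
    exact ⟨fun hy => hleaf y x hy hwxadj, fun hy => hy ▸ hwxadj⟩
  have hNwF : T.neighborFinset w = {x} := by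
    ext y
    simp [mem_neighborFinset, hNw]
  have hdegw : T.degree w = 1 := by
    rw [SimpleGraph.degree, hNwF]
    simp
  have hxa : x ≠ a := fun h => hnadjaw (h ▸ hwxadj).symm
  have hdx : T.degree x ≤ 2 := hspider x hxa
  -- choose u1 among {m1, m2} different from the second vertex c of p
  set c := p.getVert 1 with hc
  obtain ⟨u1, hu1L, hu1c⟩ : ∃ u1, (T.Adj a u1 ∧ T.degree u1 = 2) ∧ u1 ≠ c := by
    by_cases h : m1 = c
    · exact ⟨m2, hm2, fun hh => hm12 (h.trans hh.symm)⟩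
    · exact ⟨m1, hm1, h⟩
  obtain ⟨hu1a, hdegu1⟩ := hu1L
  obtain ⟨u2, hu2a, h12, hN1⟩ := otherNbr u1 hu1a hdegu1
  have hNu1F : T.neighborFinset u1 = {a, u2} := by
    ext y
    simp only [mem_neighborFinset, Finset.mem_insert, Finset.mem_singleton]
    exact ⟨fun hy => hN1 y hy, fun hy => by
      rcases hy with rfl | rfl
      · exact hu1a.symm
      · exact h12⟩
  have hu1w : u1 ≠ w := fun h => by rw [h, hdegw] at hdegu1; omega
  have hu1a' : u1 ≠ a := hu1a.ne'
  -- u1 is not on the path p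
  have hu1nsupp : u1 ∉ p.support := by
    intro hmem
    have hqr := Walk.take_spec p hmem
    have hnodup : ((p.takeUntil u1 hmem).support ++ (p.dropUntil u1 hmem).support.tail).Nodup := by
      have := hp.support_nodup
      rwa [← hqr, Walk.support_append] at this
    have hdisj := List.disjoint_of_nodup_append hnodup
    -- first vertex s after u1 in the second part
    have hrnnil : ¬ (p.dropUntil u1 hmem).Nil := Walk.not_nil_of_ne hu1w
    obtain ⟨s, hs, r'', hr''⟩ := Walk.not_nil_iff.mp hrnnil
    have hs_mem : s ∈ (p.dropUntil u1 hmem).support.tail := by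
      rw [hr'', Walk.support_cons, List.tail_cons]
      exact Walk.start_mem_support r''
    have hsau2 : s = a ∨ s = u2 := hN1 s hs
    have hsu2 : s = u2 := by
      rcases hsau2 with rfl | h
      · exact (hdisj (Walk.start_mem_support _) hs_mem).elim
      · exact h
    -- last vertex t before u1 in the first part
    have hqnnil : ¬ (p.takeUntil u1 hmem).reverse.Nil := Walk.not_nil_of_ne hu1a'
    obtain ⟨t, ht, q'', hq''⟩ := Walk.not_nil_iff.mp hqnnil
    have ht_mem : t ∈ (p.takeUntil u1 hmem).support := by
      rw [← List.mem_reverse, ← Walk.support_reverse, hq'', Walk.support_cons]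
      exact List.mem_cons_of_mem _ (Walk.start_mem_support q'')
    have htau2 : t = a ∨ t = u2 := hN1 t ht
    have hta : t = a := by
      rcases htau2 with h | rfl
      · exact h
      · rw [hsu2] at hs_mem
        exact (hdisj ht_mem hs_mem).elim
    subst hta
    -- then the takeUntil part is a single edge, so c = u1
    have hq''path : q''.IsPath := by
      have := (hp.takeUntil hmem).reverse
      rw [hq''] at this
      exact this.of_cons
    have hq''nil : q'' = Walk.nil := (Walk.isPath_iff_eq_nil (p := q'')).mp hq''path
    have hq1 : p.takeUntil u1 hmem = Walk.cons ht.symm Walk.nil := by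
      have hrr : (p.takeUntil u1 hmem).reverse.reverse = (Walk.cons ht q'').reverse := by
        rw [hq'']
      rw [Walk.reverse_reverse, hq''nil] at hrr
      rw [hrr]
      simp [Walk.reverse_cons]
    have hpc : p = Walk.cons ht.symm (p.dropUntil u1 hmem) := by
      conv_lhs => rw [← hqr]
      rw [hq1]
      simp [Walk.cons_append]
    have : c = u1 := by
      rw [hc, hpc, Walk.getVert_cons_succ, Walk.getVert_zero]
    exact hu1c this.symm
  have hxsupp : x ∈ p.support := by
    rw [← List.mem_reverse, ← Walk.support_reverse, hpr', Walk.support_cons]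
    exact List.mem_cons_of_mem _ (Walk.start_mem_support pr')
  have hu1x : u1 ≠ x := fun h => hu1nsupp (h ▸ hxsupp)

  -- reachability facts after deleting edge u1-u2
  have hedge_ne : ∀ e ∈ p.edges, e ∉ ({s(u1, u2)} : Set (Sym2 V)) := by
    intro e he hmem
    rw [Set.mem_singleton_iff] at hmem
    subst hmem
    exact hu1nsupp (Walk.fst_mem_support_of_mem_edges p he)
  have hG0aw : (T.deleteEdges {s(u1, u2)}).Reachable a w := ⟨p.toDeleteEdges _ hedge_ne⟩
  have hbridge : ¬ (T.deleteEdges {s(u1, u2)}).Reachable u1 u2 :=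
    ((isBridge_iff).mp ((isAcyclic_iff_forall_adj_isBridge.mp hacyc) h12))
  have hG0a1 : (T.deleteEdges {s(u1, u2)}).Adj a u1 := by
    rw [SimpleGraph.deleteEdges_adj]
    refine ⟨hu1a, ?_⟩
    rw [Set.mem_singleton_iff, Sym2.eq_iff]
    rintro (⟨h1, h2⟩ | ⟨h1, h2⟩)
    · exact hu1a.ne h1
    · exact hu2a h1.symm
  have hru2 : ¬ (T.deleteEdges {s(u1, u2)}).Reachable a u2 :=
    fun h => hbridge (hG0a1.reachable.symm.trans h)
  have hwu2reach : ¬ (T.deleteEdges {s(u1, u2)}).Reachable u2 w :=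
    fun h => hru2 (hG0aw.trans h.symm)
  have hwu2 : w ≠ u2 := by
    intro h
    exact hwu2reach (h ▸ Reachable.refl w)
  have hnadjwu2 : ¬ T.Adj w u2 := by
    intro h
    apply hwu2reach
    refine Adj.reachable ?_
    rw [SimpleGraph.deleteEdges_adj]
    refine ⟨h.symm, ?_⟩
    rw [Set.mem_singleton_iff, Sym2.eq_iff]
    rintro (⟨h1, h2⟩ | ⟨h1, h2⟩)
    · exact h12.ne' h1
    · exact hu1w h2.symm
  have hu2x : u2 ≠ x := fun h => hnadjwu2 (by rw [h]; exact hwxadj)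
  -- the new graph T'
  set T' : SimpleGraph V := SimpleGraph.fromEdgeSet
    (insert s(w, u2) (T.edgeSet \ {s(u1, u2)})) with hT'def
  have adjT' : ∀ v y, T'.Adj v y ↔
      (s(v, y) = s(w, u2) ∨ (T.Adj v y ∧ s(v, y) ≠ s(u1, u2))) := by
    intro v y
    rw [hT'def, SimpleGraph.fromEdgeSet_adj]
    constructor
    · rintro ⟨hmem, hne⟩
      rcases Set.mem_insert_iff.mp hmem with h | h
      · exact Or.inl h
      · exact Or.inr ⟨(SimpleGraph.mem_edgeSet T).mp h.1, h.2⟩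
    · rintro (h | ⟨hadj, hne⟩)
      · refine ⟨Set.mem_insert_iff.mpr (Or.inl h), ?_⟩
        rw [Sym2.eq_iff] at h
        rcases h with ⟨h1, h2⟩ | ⟨h1, h2⟩
        · rw [h1, h2]; exact hwu2
        · rw [h1, h2]; exact fun hh => hwu2 hh.symm
      · exact ⟨Set.mem_insert_iff.mpr (Or.inr ⟨(SimpleGraph.mem_edgeSet T).mpr hadj, hne⟩), hadj.ne⟩
  have hN'u1 : ∀ y, T'.Adj u1 y ↔ y = a := by
    intro y
    rw [adjT']
    constructor
    · rintro (h | ⟨hadj, hne⟩)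
      · rw [Sym2.eq_iff] at h
        rcases h with ⟨h1, h2⟩ | ⟨h1, h2⟩
        · exact absurd h1 hu1w
        · exact absurd h1 h12.ne
      · rcases hN1 y hadj with h | h
        · exact h
        · exact absurd (by rw [h]) hne
    · rintro rfl
      refine Or.inr ⟨hu1a.symm, ?_⟩
      simp only [ne_eq, Sym2.eq_iff]
      rintro (⟨h1, h2⟩ | ⟨h1, h2⟩)
      · exact hu2a h2.symm
      · exact h12.ne h1
  have hN'w : ∀ y, T'.Adj w y ↔ (y = u2 ∨ y = x) := by
    intro y
    rw [adjT']
    constructor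
    · rintro (h | ⟨hadj, hne⟩)
      · rw [Sym2.eq_iff] at h
        rcases h with ⟨h1, h2⟩ | ⟨h1, h2⟩
        · exact Or.inl h2
        · exact absurd h1 hwu2
      · exact Or.inr ((hNw y).mp hadj)
    · rintro (rfl | rfl)
      · exact Or.inl rfl
      · refine Or.inr ⟨hwxadj, ?_⟩
        simp only [ne_eq, Sym2.eq_iff]
        rintro (⟨h1, h2⟩ | ⟨h1, h2⟩)
        · exact hu1w h1.symm
        · exact hwu2 h1
  have hN'u2 : ∀ y, T'.Adj u2 y ↔ (y = w ∨ (T.Adj u2 y ∧ y ≠ u1)) := by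
    intro y
    rw [adjT']
    constructor
    · rintro (h | ⟨hadj, hne⟩)
      · rw [Sym2.eq_iff] at h
        rcases h with ⟨h1, h2⟩ | ⟨h1, h2⟩
        · exact absurd h1.symm hwu2
        · exact Or.inl h2
      · refine Or.inr ⟨hadj, fun hy => hne ?_⟩
        rw [hy, Sym2.eq_swap]
    · rintro (rfl | ⟨hadj, hyu1⟩)
      · exact Or.inl (Sym2.eq_swap)
      · refine Or.inr ⟨hadj, ?_⟩
        simp only [ne_eq, Sym2.eq_iff]
        rintro (⟨h1, h2⟩ | ⟨h1, h2⟩)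
        · exact h12.ne h1.symm
        · exact hyu1 h2
  have hN'keep : ∀ v, v ≠ u1 → v ≠ u2 → v ≠ w → ∀ y, (T'.Adj v y ↔ T.Adj v y) := by
    intro v h1 h2 h3 y
    rw [adjT']
    constructor
    · rintro (h | ⟨hadj, hne⟩)
      · rw [Sym2.eq_iff] at h
        rcases h with ⟨g1, g2⟩ | ⟨g1, g2⟩
        · exact absurd g1 h3
        · exact absurd g1 h2
      · exact hadj
    · intro hadj
      refine Or.inr ⟨hadj, ?_⟩
      simp only [ne_eq, Sym2.eq_iff]
      rintro (⟨g1, g2⟩ | ⟨g1, g2⟩)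
      · exact h1 g1
      · exact h2 g1
  -- degrees in T'
  have hdeg'u1 : T'.degree u1 = 1 := by
    have : T'.neighborFinset u1 = {a} := by
      ext y
      simp [mem_neighborFinset, hN'u1]
    rw [SimpleGraph.degree, this, Finset.card_singleton]
  have hdeg'w : T'.degree w = 2 := by
    have : T'.neighborFinset w = {u2, x} := by
      ext y
      simp [mem_neighborFinset, hN'w]
    rw [SimpleGraph.degree, this, Finset.card_insert_of_notMem (by simpa using hu2x),
      Finset.card_singleton]
  have hdeg'u2 : T'.degree u2 = T.degree u2 := by
    have hset : T'.neighborFinset u2 = insert w ((T.neighborFinset u2).erase u1) := by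
      ext y
      simp only [mem_neighborFinset, hN'u2, Finset.mem_insert, Finset.mem_erase]
      tauto
    have hwnot : w ∉ (T.neighborFinset u2).erase u1 := by
      rw [Finset.mem_erase, mem_neighborFinset]
      rintro ⟨-, h⟩
      exact hnadjwu2 h.symm
    have hu1mem : u1 ∈ T.neighborFinset u2 := (mem_neighborFinset _ _ _).mpr h12.symm
    have hpos : 0 < (T.neighborFinset u2).card := Finset.card_pos.mpr ⟨u1, hu1mem⟩
    rw [SimpleGraph.degree, hset, Finset.card_insert_of_notMem hwnot,
      Finset.card_erase_of_mem hu1mem, SimpleGraph.degree]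
    omega
  have hdeg'keep : ∀ v, v ≠ u1 → v ≠ w → T'.degree v = T.degree v := by
    intro v h1 h3
    by_cases h2 : v = u2
    · rw [h2]; exact hdeg'u2
    · have : T'.neighborFinset v = T.neighborFinset v := by
        ext y
        simp [mem_neighborFinset, hN'keep v h1 h2 h3]
      rw [SimpleGraph.degree, this, SimpleGraph.degree]

  -- T' is connected
  have hle : T.deleteEdges {s(u1, u2)} ≤ T' := by
    intro v y h
    rw [SimpleGraph.deleteEdges_adj] at h
    rw [adjT']
    exact Or.inr ⟨h.1, by simpa using h.2⟩
  have hT'wu2 : T'.Adj w u2 := (adjT' w u2).mpr (Or.inl rfl)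
  have hreach1 : ∀ v, (T.deleteEdges {s(u1, u2)}).Reachable a v ∨
      (T.deleteEdges {s(u1, u2)}).Reachable u2 v := by
    intro v
    obtain ⟨q⟩ := hconn a v
    exact reach_side hu1a (fun h => hu2a h.symm) q (Or.inl (Reachable.refl a))
  have hT'reach : ∀ v, T'.Reachable a v := by
    intro v
    rcases hreach1 v with h | h
    · exact h.mono hle
    · exact ((hG0aw.mono hle).trans hT'wu2.reachable).trans (h.mono hle)
  have hT'conn : T'.Connected := by
    rw [connected_iff]
    exact ⟨fun v y => (hT'reach v).symm.trans (hT'reach y), ⟨a⟩⟩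
  -- T' is acyclic
  have hT'bridge : T'.IsBridge s(w, u2) := by
    rw [isBridge_iff]
    refine fun hreach => ?_
    apply hwu2reach
    refine Reachable.symm (hreach.mono ?_)
    intro v y h
    rcases h with ⟨hadj0, hne⟩
    have hvy : v ≠ y := hadj0.ne
    simp only [SimpleGraph.fromEdgeSet_adj, Set.mem_singleton_iff] at hne
    rw [adjT'] at hadj0
    rw [SimpleGraph.deleteEdges_adj]
    rcases hadj0 with h | ⟨hadj, hne'⟩
    · exact absurd ⟨h, hvy⟩ hne
    · exact ⟨hadj, by simpa using hne'⟩
  have hT'acyc : T'.IsAcyclic := by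
    intro v cyc hcyc
    have hnotin : s(w, u2) ∉ cyc.edges :=
      (isBridge_iff_adj_and_forall_cycle_notMem hT'wu2).mp hT'bridge cyc hcyc
    have hedges : ∀ e ∈ cyc.edges, e ∈ T.edgeSet := by
      intro e he
      have hmem := cyc.edges_subset_edgeSet he
      rw [hT'def, SimpleGraph.edgeSet_fromEdgeSet] at hmem
      rcases hmem with ⟨hmem, -⟩
      rcases Set.mem_insert_iff.mp hmem with h | h
      · exact absurd (h ▸ he) hnotin
      · exact h.1
    exact hacyc _ ((hcyc.transfer hedges))
  have hT'tree : T'.IsTree := (isTree_iff _).mpr ⟨hT'conn, hT'acyc⟩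

  -- edge sets
  have hE'set : T'.edgeSet = insert s(w, u2) (T.edgeSet \ {s(u1, u2)}) := by
    rw [hT'def, SimpleGraph.edgeSet_fromEdgeSet]
    ext e
    constructor
    · exact fun h => h.1
    · intro h
      refine ⟨h, ?_⟩
      rcases Set.mem_insert_iff.mp h with h' | h'
      · subst h'
        simp only [Sym2.mem_diagSet, Sym2.isDiag_iff_proj_eq]
        exact hwu2
      · exact fun hd => (SimpleGraph.not_isDiag_of_mem_edgeSet T h'.1) hd
  have hEF : T'.edgeFinset = insert s(w, u2) (T.edgeFinset.erase s(u1, u2)) := by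
    ext e
    rw [SimpleGraph.mem_edgeFinset, hE'set]
    simp only [Set.mem_insert_iff, Set.mem_diff, Set.mem_singleton_iff, Finset.mem_insert,
      Finset.mem_erase, Set.mem_toFinset, SimpleGraph.mem_edgeFinset]
    tauto
  -- edges and distinctness
  have haw : a ≠ w := fun h => hwa h.symm
  have hau1 : a ≠ u1 := hu1a.ne
  have he0 : s(u1, u2) ∈ T.edgeFinset := SimpleGraph.mem_edgeFinset.mpr h12
  have hea : s(a, u1) ∈ T.edgeFinset := SimpleGraph.mem_edgeFinset.mpr hu1a
  have hex : s(w, x) ∈ T.edgeFinset := SimpleGraph.mem_edgeFinset.mpr hwxadj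
  have he1notin : s(w, u2) ∉ T.edgeFinset := fun h =>
    hnadjwu2 (SimpleGraph.mem_edgeFinset.mp h)
  have ne_ea_e0 : s(a, u1) ≠ s(u1, u2) := by
    simp only [ne_eq, Sym2.eq_iff]
    rintro (⟨g1, g2⟩ | ⟨g1, g2⟩)
    · exact hau1 g1
    · exact hu2a g1.symm
  have ne_ex_e0 : s(w, x) ≠ s(u1, u2) := by
    simp only [ne_eq, Sym2.eq_iff]
    rintro (⟨g1, g2⟩ | ⟨g1, g2⟩)
    · exact hu1w g1.symm
    · exact hwu2 g1
  have ne_ex_ea : s(w, x) ≠ s(a, u1) := by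
    simp only [ne_eq, Sym2.eq_iff]
    rintro (⟨g1, g2⟩ | ⟨g1, g2⟩)
    · exact haw g1.symm
    · exact hu1w g1.symm
  have he1_ne_ea : s(w, u2) ≠ s(a, u1) := by
    simp only [ne_eq, Sym2.eq_iff]
    rintro (⟨g1, g2⟩ | ⟨g1, g2⟩)
    · exact haw g1.symm
    · exact hu1w g1.symm
  have he1_ne_ex : s(w, u2) ≠ s(w, x) := by
    simp only [ne_eq, Sym2.eq_iff]
    rintro (⟨g1, g2⟩ | ⟨g1, g2⟩)
    · exact hu2x g2
    · exact hwxadj.ne g1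

  -- degree preservation off the special vertices
  have hkeep2 : ∀ v y, T.Adj v y → s(v, y) ≠ s(u1, u2) → s(v, y) ≠ s(a, u1) →
      s(v, y) ≠ s(w, x) → T'.degree v = T.degree v := by
    intro v y hadj h0 ha hx
    apply hdeg'keep v
    · rintro rfl
      rcases hN1 y hadj with rfl | rfl
      · exact ha Sym2.eq_swap
      · exact h0 rfl
    · rintro rfl
      have := (hNw y).mp hadj
      subst this
      exact hx rfl
  have hdeg'a : T'.degree a = Δ := by
    rw [hdeg'keep a hau1 haw]; exact hdega
  have hdeg'x : T'.degree x = T.degree x := hdeg'keep x (Ne.symm hu1x) hwxadj.ne'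
  -- memberships for the sum decomposition
  have hea' : s(a, u1) ∈ T.edgeFinset.erase s(u1, u2) := Finset.mem_erase.mpr ⟨ne_ea_e0, hea⟩
  have hex' : s(w, x) ∈ (T.edgeFinset.erase s(u1, u2)).erase s(a, u1) :=
    Finset.mem_erase.mpr ⟨ne_ex_ea, Finset.mem_erase.mpr ⟨ne_ex_e0, hex⟩⟩
  have he1' : s(w, u2) ∉ T.edgeFinset.erase s(u1, u2) := fun h =>
    he1notin (Finset.mem_erase.mp h).2
  -- identical summands away from the special edges
  have hRsame : ∀ e ∈ ((T.edgeFinset.erase s(u1, u2)).erase s(a, u1)).erase s(w, x),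
      Sym2.lift ⟨fun v y => ((T'.degree v : ℝ) + l) * ((T'.degree y : ℝ) + l),
        fun v y => by ring⟩ e
      = Sym2.lift ⟨fun v y => ((T.degree v : ℝ) + l) * ((T.degree y : ℝ) + l),
        fun v y => by ring⟩ e := by
    intro e
    refine Sym2.ind (fun v y => ?_) e
    intro he
    rw [Finset.mem_erase, Finset.mem_erase, Finset.mem_erase] at he
    obtain ⟨hne_x, hne_a, hne_0, hmemE⟩ := he
    have hadj : T.Adj v y := SimpleGraph.mem_edgeFinset.mp hmemE
    have hv : T'.degree v = T.degree v := hkeep2 v y hadj hne_0 hne_a hne_x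
    have hy : T'.degree y = T.degree y := by
      refine hkeep2 y v hadj.symm ?_ ?_ ?_ <;> rw [Sym2.eq_swap] <;> assumption
    simp only [Sym2.lift_mk]
    rw [hv, hy]
  have hsum_eq :
      ∑ e ∈ ((T.edgeFinset.erase s(u1, u2)).erase s(a, u1)).erase s(w, x),
        Sym2.lift ⟨fun v y => ((T'.degree v : ℝ) + l) * ((T'.degree y : ℝ) + l),
          fun v y => by ring⟩ e
      = ∑ e ∈ ((T.edgeFinset.erase s(u1, u2)).erase s(a, u1)).erase s(w, x),
        Sym2.lift ⟨fun v y => ((T.degree v : ℝ) + l) * ((T.degree y : ℝ) + l),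
          fun v y => by ring⟩ e := Finset.sum_congr rfl hRsame
  have hGRM : GRM l T' < GRM l T := by
    rw [GRM_eq l T', GRM_eq l T, hEF, Finset.sum_insert he1',
      ← Finset.add_sum_erase _ _ he0,
      ← Finset.add_sum_erase _ _ hea', ← Finset.add_sum_erase _ _ hea',
      ← Finset.add_sum_erase _ _ hex', ← Finset.add_sum_erase _ _ hex',
      hsum_eq]
    simp only [Sym2.lift_mk]
    rw [hdeg'w, hdeg'u2, hdeg'a, hdeg'u1, hdeg'x, hdegu1, hdega, hdegw]
    have hltx : (T.degree x : ℝ) < (Δ : ℝ) := by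
      have : T.degree x < Δ := by omega
      exact_mod_cast this
    push_cast
    nlinarith [hltx]
  -- assemble the result
  refine ⟨T', hT'tree, ⟨a, ?_⟩, ?_, hGRM⟩
  · intro v hv
    rw [deg_eq]
    by_cases hv1 : v = u1
    · rw [hv1, hdeg'u1]; omega
    · by_cases hvw : v = w
      · rw [hvw, hdeg'w]
      · rw [hdeg'keep v hv1 hvw]
        exact hspider v hv
  · rw [maxDeg_eq]
    refine le_antisymm (SimpleGraph.maxDegree_le_of_forall_degree_le _ _ ?_) ?_
    · intro v
      by_cases hva : v = a
      · rw [hva, hdeg'a]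
      · by_cases hv1 : v = u1
        · rw [hv1, hdeg'u1]; omega
        · by_cases hvw : v = w
          · rw [hvw, hdeg'w]; omega
          · rw [hdeg'keep v hv1 hvw]
            have := hspider v hva
            omega
    · rw [← hdeg'a]
      exact SimpleGraph.degree_le_maxDegree T' a
end

section
/- Let λ ≥ -1/2 be a real number and let Δ ≥ 3 satisfy 2λ+6 < Δ and Δ < n-3. If U is a unicyclic graph with n vertices and maximum degree Δ, then GRM_λ(U) ≥ (Δ+λ)(Δ+Δλ+1) + (n-Δ)(2+λ)² + 3(2+λ). -/
open SimpleGraph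

open Finset

set_option linter.unusedSectionVars false
set_option maxHeartbeats 1000000

section DartSums
variable {V : Type*} [Fintype V] [DecidableEq V] {G : SimpleGraph V} [DecidableRel G.Adj]

lemma sum_dart_edge (f : Sym2 V → ℝ) :
    ∑ d : G.Dart, f d.edge = 2 * ∑ e ∈ G.edgeFinset, f e := by
  rw [← Finset.sum_fiberwise_of_maps_to (g := SimpleGraph.Dart.edge)
    (t := G.edgeFinset) (fun d _ => by simp [mem_edgeFinset])]
  rw [Finset.mul_sum]
  refine Finset.sum_congr rfl fun e he => ?_
  have h2 : #{d : G.Dart | d.edge = e} = 2 :=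
    G.dart_edge_fiber_card e (by rwa [← mem_edgeFinset])
  calc ∑ d ∈ {d : G.Dart | d.edge = e}, f d.edge
      = ∑ d ∈ {d : G.Dart | d.edge = e}, f e := by
        refine Finset.sum_congr rfl fun d hd => ?_
        rw [Finset.mem_filter] at hd
        rw [hd.2]
    _ = 2 * f e := by rw [Finset.sum_const, h2]; simp [mul_comm]

lemma sum_dart_fst (h : V → V → ℝ) :
    ∑ d : G.Dart, h d.fst d.snd = ∑ v, ∑ u ∈ G.neighborFinset v, h v u := by
  rw [← Finset.sum_fiberwise_of_maps_to (g := fun d : G.Dart => d.fst)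
    (t := Finset.univ) (fun d _ => Finset.mem_univ _)]
  refine Finset.sum_congr rfl fun v _ => ?_
  rw [G.dart_fst_fiber v, Finset.sum_image
    (fun a _ b _ hab => G.dartOfNeighborSet_injective v hab)]
  rw [neighborFinset_def, ← Finset.sum_set_coe (s := G.neighborSet v)]
  rfl

lemma sum_dart_swap (h : V → V → ℝ) :
    ∑ d : G.Dart, h d.fst d.snd = ∑ d : G.Dart, h d.snd d.fst := by
  exact Finset.sum_nbij' (fun d => d.symm) (fun d => d.symm)
    (by simp) (by simp) (by simp) (by simp) (by simp)

lemma sum_edge_eq_sum_nbr (f : Sym2 V → ℝ) (h : V → V → ℝ)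
    (H : ∀ a b, G.Adj a b → f s(a, b) = h a b + h b a) :
    2 * ∑ e ∈ G.edgeFinset, f e = 2 * ∑ v, ∑ u ∈ G.neighborFinset v, h v u := by
  rw [← sum_dart_edge]
  have hd : ∀ d : G.Dart, f d.edge = h d.fst d.snd + h d.snd d.fst := fun d =>
    H d.fst d.snd d.adj
  rw [Finset.sum_congr rfl fun d _ => hd d, Finset.sum_add_distrib,
    sum_dart_swap (fun a b => h b a), ← two_mul, sum_dart_fst]

end DartSums

section Structure
variable {V : Type*} [Fintype V] [DecidableEq V] {G : SimpleGraph V} [DecidableRel G.Adj]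

lemma cycle_basept_two_nbrs {v : V} {c : G.Walk v v} (hc : c.IsCycle) :
    ∃ a b, a ≠ b ∧ G.Adj v a ∧ G.Adj v b ∧ s(v, a) ∈ c.edges ∧ s(v, b) ∈ c.edges := by
  cases c with
  | nil => exact absurd hc SimpleGraph.Walk.IsCycle.not_of_nil
  | @cons _ s _ h q =>
    obtain ⟨b, hb, r, hrev⟩ := SimpleGraph.Walk.exists_eq_cons_of_ne (G.ne_of_adj h) q.reverse
    have hbq : s(v, b) ∈ q.edges := by
      have : s(v, b) ∈ q.reverse.edges := by rw [hrev, SimpleGraph.Walk.edges_cons]; simp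
      rwa [SimpleGraph.Walk.edges_reverse, List.mem_reverse] at this
    have hnodup : (SimpleGraph.Walk.cons h q).edges.Nodup := hc.isCircuit.isTrail.edges_nodup
    rw [SimpleGraph.Walk.edges_cons, List.nodup_cons] at hnodup
    have hsb : s ≠ b := by
      rintro rfl
      exact hnodup.1 hbq
    exact ⟨s, b, hsb, h, hb, by rw [SimpleGraph.Walk.edges_cons]; simp,
      by rw [SimpleGraph.Walk.edges_cons]; exact List.mem_cons_of_mem _ hbq⟩

lemma cycle_two_nbrs {u : V} {c : G.Walk u u} (hc : c.IsCycle)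
    {v : V} (hv : v ∈ c.support) :
    ∃ a b, a ≠ b ∧ G.Adj v a ∧ G.Adj v b ∧ a ∈ c.support ∧ b ∈ c.support := by
  obtain ⟨a, b, hab, ha, hb, hea, heb⟩ := cycle_basept_two_nbrs (hc.rotate hv)
  have hrot := SimpleGraph.Walk.rotate_edges c v hv
  exact ⟨a, b, hab, ha, hb, c.snd_mem_support_of_mem_edges (hrot.mem_iff.mp hea),
    c.snd_mem_support_of_mem_edges (hrot.mem_iff.mp heb)⟩

lemma cycle_two_le_degree {u : V} {c : G.Walk u u} (hc : c.IsCycle)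
    {v : V} (hv : v ∈ c.support) : 2 ≤ G.degree v := by
  obtain ⟨a, b, hab, ha, hb, -, -⟩ := cycle_two_nbrs hc hv
  have hsub : ({a, b} : Finset V) ⊆ G.neighborFinset v := by
    intro x hx
    rcases Finset.mem_insert.1 hx with rfl | hx
    · exact (SimpleGraph.mem_neighborFinset _ _ _).2 ha
    · rw [Finset.mem_singleton] at hx; subst hx
      exact (SimpleGraph.mem_neighborFinset _ _ _).2 hb
  calc 2 = ({a, b} : Finset V).card := (Finset.card_pair hab).symm
    _ ≤ (G.neighborFinset v).card := Finset.card_le_card hsub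
    _ = G.degree v := rfl

lemma entry_lemma (C : Set V) {a b : V} (p : G.Walk a b) :
    a ∉ C → b ∈ C →
    ∃ z v, G.Adj z v ∧ z ∉ C ∧ v ∈ C ∧ (z = a ∨ 2 ≤ G.degree z) := by
  induction p with
  | nil => intro h1 h2; exact absurd h2 h1
  | @cons a a' b h q ih =>
    intro h1 h2
    by_cases ha' : a' ∈ C
    · exact ⟨a, a', h, h1, ha', Or.inl rfl⟩
    · obtain ⟨z, v, hzv, hz, hv, hcase⟩ := ih ha' h2
      rcases hcase with rfl | hdeg
      · refine ⟨z, v, hzv, hz, hv, Or.inr ?_⟩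
        have hne : a ≠ v := fun he => h1 (he ▸ hv)
        have hsub : ({a, v} : Finset V) ⊆ G.neighborFinset z := by
          intro x hx
          rcases Finset.mem_insert.1 hx with rfl | hx
          · exact (SimpleGraph.mem_neighborFinset _ _ _).2 h.symm
          · rw [Finset.mem_singleton] at hx; subst hx
            exact (SimpleGraph.mem_neighborFinset _ _ _).2 hzv
        calc 2 = ({a, v} : Finset V).card := (Finset.card_pair hne).symm
          _ ≤ (G.neighborFinset z).card := Finset.card_le_card hsub
          _ = G.degree z := rfl
      · exact ⟨z, v, hzv, hz, hv, Or.inr hdeg⟩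

lemma exists_nbr_two_le_degree (hconn : G.Connected)
    (hedge : #G.edgeFinset = Fintype.card V) (y : V) (hy : 0 < G.degree y) :
    ∃ u, G.Adj y u ∧ 2 ≤ G.degree u := by
  by_contra hcon
  push_neg at hcon
  have hdeg1 : ∀ u, G.Adj y u → G.degree u = 1 := by
    intro u hu
    have h1 : 0 < G.degree u := by
      rw [SimpleGraph.degree_pos_iff_exists_adj]
      exact ⟨y, hu.symm⟩
    have := hcon u hu
    omega
  have hadj : ∀ a, a ≠ y → G.Adj y a := by
    intro a hay
    obtain ⟨p0⟩ := hconn.preconnected y a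
    obtain ⟨p, hp⟩ := p0.toPath
    clear p0
    cases p with
    | nil => exact absurd rfl hay.symm
    | @cons _ s _ h q =>
      cases q with
      | nil => exact h
      | @cons _ b _ h2 r =>
        have hds : G.degree s = 1 := hdeg1 s h
        have hby : b = y := by
          by_contra hne
          have hsub : ({y, b} : Finset V) ⊆ G.neighborFinset s := by
            intro x hx
            rcases Finset.mem_insert.1 hx with rfl | hx
            · exact (SimpleGraph.mem_neighborFinset _ _ _).2 h.symm
            · rw [Finset.mem_singleton] at hx; subst hx
              exact (SimpleGraph.mem_neighborFinset _ _ _).2 h2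
          have h2le : 2 ≤ G.degree s := by
            calc 2 = ({y, b} : Finset V).card := (Finset.card_pair (Ne.symm hne)).symm
              _ ≤ (G.neighborFinset s).card := Finset.card_le_card hsub
              _ = G.degree s := rfl
          omega
        subst hby
        have := hp.support_nodup
        simp [SimpleGraph.Walk.support_cons] at this
  have hNy : G.neighborFinset y = Finset.univ.erase y := by
    ext u
    simp only [SimpleGraph.mem_neighborFinset, Finset.mem_erase, Finset.mem_univ, and_true]
    exact ⟨fun h => (G.ne_of_adj h).symm, fun h => hadj u h⟩
  have hdy : G.degree y = Fintype.card V - 1 := by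
    rw [← SimpleGraph.card_neighborFinset_eq_degree, hNy,
      Finset.card_erase_of_mem (Finset.mem_univ y), Finset.card_univ]
  have hsum : ∑ v, G.degree v = 2 * Fintype.card V := by
    rw [SimpleGraph.sum_degrees_eq_twice_card_edges, hedge]
  have hsum2 : ∑ v, G.degree v = G.degree y + ∑ v ∈ Finset.univ.erase y, G.degree v :=
    (Finset.add_sum_erase _ _ (Finset.mem_univ y)).symm
  have hsum3 : ∑ v ∈ Finset.univ.erase y, G.degree v = Fintype.card V - 1 := by
    rw [Finset.sum_congr rfl (fun v hv => hdeg1 v (hadj v (Finset.mem_erase.1 hv).1))]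
    simp [Finset.card_erase_of_mem]
  have hpos : 0 < Fintype.card V := Fintype.card_pos_iff.2 ⟨y⟩
  omega

end Structure

section Counting
variable {V : Type*} [Fintype V] [DecidableEq V] (G : SimpleGraph V) [DecidableRel G.Adj]

/-- Product of shifted degrees over an edge. -/
noncomputable def xprod : Sym2 V → ℝ :=
  Sym2.lift ⟨fun a b => ((G.degree a : ℝ) - 2) * ((G.degree b : ℝ) - 2), fun a b => by ring⟩

/-- Number of pendant (degree-1) neighbors. -/
def pcount (v : V) : ℕ := #((G.neighborFinset v).filter fun u => G.degree u = 1)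

/-- Number of non-pendant neighbors. -/
def qcount (v : V) : ℕ := #((G.neighborFinset v).filter fun u => 2 ≤ G.degree u)

lemma pcount_add_qcount (v : V) (h : 0 < G.degree v) (hall : ∀ u, G.Adj v u → 0 < G.degree u) :
    pcount G v + qcount G v = G.degree v := by
  rw [pcount, qcount]
  have : (G.neighborFinset v).filter (fun u => 2 ≤ G.degree u)
      = (G.neighborFinset v).filter (fun u => ¬ (G.degree u = 1)) := by
    refine Finset.filter_congr fun u hu => ?_
    have := hall u ((SimpleGraph.mem_neighborFinset _ _ _).1 hu)
    constructor
    · intro h2; omega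
    · intro h2; omega
  rw [this, Finset.card_filter_add_card_filter_not]
  rfl

lemma pcount_le_degree (v : V) : pcount G v ≤ G.degree v :=
  le_trans (Finset.card_le_card (Finset.filter_subset _ _))
    (le_of_eq (SimpleGraph.card_neighborFinset_eq_degree _ _))

/-- The per-vertex quantity in the discharging argument. -/
noncomputable def tf (l : ℝ) (v : V) : ℝ :=
  (2 + l) * (((G.degree v : ℝ) - 1) * ((G.degree v : ℝ) - 2))
    - (if 3 ≤ G.degree v then (pcount G v : ℝ) * ((G.degree v : ℝ) - 2) else 0)

lemma sum_xsum :
    ∑ e ∈ G.edgeFinset,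
      Sym2.lift ⟨fun a b => ((G.degree a : ℝ) - 2) + ((G.degree b : ℝ) - 2),
        fun a b => by ring⟩ e
    = ∑ v, (G.degree v : ℝ) * ((G.degree v : ℝ) - 2) := by
  apply mul_left_cancel₀ (two_ne_zero (α := ℝ))
  rw [sum_edge_eq_sum_nbr _ (fun a b => (G.degree a : ℝ) - 2) (fun a b hab => by simp)]
  congr 1
  refine Finset.sum_congr rfl fun v _ => ?_
  rw [Finset.sum_const, SimpleGraph.card_neighborFinset_eq_degree, nsmul_eq_mul]

lemma grm_split (l : ℝ) :
    ∑ e ∈ G.edgeFinset,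
      Sym2.lift ⟨fun a b => ((G.degree a : ℝ) + l) * ((G.degree b : ℝ) + l),
        fun a b => by ring⟩ e
    = ∑ e ∈ G.edgeFinset, xprod G e
      + (2 + l) * ∑ v, (G.degree v : ℝ) * ((G.degree v : ℝ) - 2)
      + (#G.edgeFinset : ℝ) * (2 + l) ^ 2 := by
  rw [← sum_xsum G]
  have hsplit : ∀ e ∈ G.edgeFinset,
      Sym2.lift ⟨fun a b => ((G.degree a : ℝ) + l) * ((G.degree b : ℝ) + l),
        fun a b => by ring⟩ e
      = xprod G e
        + ((2 + l) * Sym2.lift ⟨fun a b => ((G.degree a : ℝ) - 2) + ((G.degree b : ℝ) - 2),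
            fun a b => by ring⟩ e + (2 + l) ^ 2) := by
    refine fun e _ => Sym2.ind (fun a b => ?_) e
    simp only [xprod, Sym2.lift_mk]
    ring
  rw [Finset.sum_congr rfl hsplit, Finset.sum_add_distrib, Finset.sum_add_distrib,
    Finset.sum_const, nsmul_eq_mul, ← Finset.mul_sum]
  ring

lemma sum_xprod_ge :
    -∑ v, (if 3 ≤ G.degree v then (pcount G v : ℝ) * ((G.degree v : ℝ) - 2) else 0)
      ≤ ∑ e ∈ G.edgeFinset, xprod G e := by
  classical
  set χ : V → V → ℝ := fun a b =>
    if 3 ≤ G.degree a ∧ G.degree b = 1 then -((G.degree a : ℝ) - 2) else 0 with hχ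
  have key : 2 * ∑ e ∈ G.edgeFinset,
      Sym2.lift ⟨fun a b => χ a b + χ b a, fun a b => add_comm (χ a b) (χ b a)⟩ e
      = 2 * ∑ v, ∑ u ∈ G.neighborFinset v, χ v u :=
    sum_edge_eq_sum_nbr _ χ (fun a b hab => by rw [Sym2.lift_mk])
  have key' : ∑ e ∈ G.edgeFinset,
      Sym2.lift ⟨fun a b => χ a b + χ b a, fun a b => add_comm (χ a b) (χ b a)⟩ e
      = ∑ v, ∑ u ∈ G.neighborFinset v, χ v u :=
    mul_left_cancel₀ (two_ne_zero (α := ℝ)) key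
  have hinner : ∀ v, ∑ u ∈ G.neighborFinset v, χ v u
      = -(if 3 ≤ G.degree v then (pcount G v : ℝ) * ((G.degree v : ℝ) - 2) else 0) := by
    intro v
    by_cases h3 : 3 ≤ G.degree v
    · simp only [hχ, h3, true_and, if_pos]
      rw [← Finset.sum_filter]
      rw [Finset.sum_const, pcount]
      push_cast
      ring
    · rw [if_neg h3, neg_zero]
      exact Finset.sum_eq_zero fun u hu => by simp [hχ, h3]
  have hle : ∀ e ∈ G.edgeFinset,
      Sym2.lift ⟨fun a b => χ a b + χ b a, fun a b => add_comm (χ a b) (χ b a)⟩ e ≤ xprod G e := by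
    refine fun e => Sym2.ind (fun a b he => ?_) e
    have hadj : G.Adj a b := by rwa [mem_edgeFinset, mem_edgeSet] at he
    have ha : 1 ≤ G.degree a := by
      rw [Nat.one_le_iff_ne_zero, ← Nat.pos_iff_ne_zero, SimpleGraph.degree_pos_iff_exists_adj]
      exact ⟨b, hadj⟩
    have hb : 1 ≤ G.degree b := by
      rw [Nat.one_le_iff_ne_zero, ← Nat.pos_iff_ne_zero, SimpleGraph.degree_pos_iff_exists_adj]
      exact ⟨a, hadj.symm⟩
    simp only [xprod, Sym2.lift_mk, hχ]
    -- numeric lemma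
    set da := G.degree a
    set db := G.degree b
    split_ifs with h1 h2 h2
    · omega
    · have hdb : (db : ℝ) = 1 := by exact_mod_cast h1.2
      rw [hdb]; nlinarith
    · have hda : (da : ℝ) = 1 := by exact_mod_cast h2.2
      rw [hda]; nlinarith
    · push_neg at h1 h2
      rcases Nat.lt_or_ge da 3 with hda | hda <;> rcases Nat.lt_or_ge db 3 with hdb | hdb
      · have g1 : (da : ℝ) ≤ 2 := by exact_mod_cast Nat.lt_succ_iff.mp hda
        have g2 : (db : ℝ) ≤ 2 := by exact_mod_cast Nat.lt_succ_iff.mp hdb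
        nlinarith
      · have h3 : da = 2 := by have := h2 hdb; omega
        simp [h3]
      · have h3 : db = 2 := by have := h1 hda; omega
        simp [h3]
      · have g1 : (3 : ℝ) ≤ (da : ℝ) := by exact_mod_cast hda
        have g2 : (3 : ℝ) ≤ (db : ℝ) := by exact_mod_cast hdb
        nlinarith
  calc -∑ v, (if 3 ≤ G.degree v then (pcount G v : ℝ) * ((G.degree v : ℝ) - 2) else 0)
      = ∑ v, -(if 3 ≤ G.degree v then (pcount G v : ℝ) * ((G.degree v : ℝ) - 2) else 0) := by
        rw [Finset.sum_neg_distrib]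
    _ = ∑ v, ∑ u ∈ G.neighborFinset v, χ v u :=
        (Finset.sum_congr rfl fun v _ => (hinner v).symm)
    _ = ∑ e ∈ G.edgeFinset,
        Sym2.lift ⟨fun a b => χ a b + χ b a, fun a b => add_comm (χ a b) (χ b a)⟩ e := key'.symm
    _ ≤ ∑ e ∈ G.edgeFinset, xprod G e := Finset.sum_le_sum hle

lemma tf_nonneg (l : ℝ) (hl : -1/2 ≤ l) (v : V) : 0 ≤ tf G l v := by
  rw [tf]
  by_cases h3 : 3 ≤ G.degree v
  · rw [if_pos h3]
    have hD : (3 : ℝ) ≤ (G.degree v : ℝ) := by exact_mod_cast h3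
    have hp : (pcount G v : ℝ) ≤ (G.degree v : ℝ) := by exact_mod_cast pcount_le_degree G v
    have hterm : (0:ℝ) ≤ (1+l)*((G.degree v : ℝ)-1) - 1 := by
      nlinarith [mul_nonneg (by linarith : (0:ℝ) ≤ 1/2+l)
        (by linarith : (0:ℝ) ≤ (G.degree v : ℝ)-1)]
    nlinarith [mul_nonneg (by linarith : (0:ℝ) ≤ (G.degree v : ℝ) - 2) hterm]
  · rw [if_neg h3]
    push_neg at h3
    have hd2 : G.degree v ≤ 2 := by omega
    have : 0 ≤ ((G.degree v : ℝ) - 1) * ((G.degree v : ℝ) - 2) := by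
      interval_cases h : G.degree v <;> norm_num
    nlinarith
end Counting


theorem stmt5 {V : Type*} [Fintype V] (l : ℝ) (hl : -1/2 ≤ l)
    (n Δ : ℕ) (hΔ3 : 3 ≤ Δ) (hlow : 2 * l + 6 < (Δ : ℝ)) (hhigh : Δ < n - 3)
    (U : SimpleGraph V) (hU : IsUnicyclic U)
    (hcard : Fintype.card V = n) (hmax : maxDeg U = Δ) :
    GRM l U ≥ ((Δ : ℝ) + l) * ((Δ : ℝ) + (Δ : ℝ) * l + 1)
      + ((n : ℝ) - (Δ : ℝ)) * (2 + l) ^ 2 + 3 * (2 + l) := by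
  letI : DecidableEq V := Classical.decEq V
  letI : DecidableRel U.Adj := Classical.decRel _
  obtain ⟨hconn, hcount⟩ := hU
  have hedgesV : #U.edgeFinset = Fintype.card V := by
    have h := hcount
    rw [Set.ncard_eq_toFinset_card' U.edgeSet] at h
    rw [← h]
    congr 1
  have hedges : #U.edgeFinset = n := by rw [hedgesV, hcard]
  have hΔ6 : 6 ≤ Δ := by
    have h5 : (5 : ℝ) < (Δ : ℝ) := by linarith
    exact_mod_cast Nat.succ_le_of_lt (by exact_mod_cast h5)
  have hn : Δ + 4 ≤ n := by omega
  have hVpos : 0 < Fintype.card V := by omega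
  haveI : Nonempty V := Fintype.card_pos_iff.mp hVpos
  obtain ⟨w, hw⟩ := U.exists_maximal_degree_vertex
  have hmax' : U.maxDegree = Δ := hmax
  have hdw : U.degree w = Δ := by rw [← hw, hmax']
  have hdle : ∀ v, U.degree v ≤ Δ := fun v => hmax' ▸ U.degree_le_maxDegree v
  have hdpos : ∀ v, 0 < U.degree v := by
    intro v
    rw [SimpleGraph.degree_pos_iff_exists_adj]
    have hne : ∃ u : V, u ≠ v := by
      by_contra hne
      push_neg at hne
      have : Fintype.card V ≤ 1 := Fintype.card_le_one_iff.2 fun a b => by rw [hne a, hne b]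
      omega
    obtain ⟨u, hu⟩ := hne
    obtain ⟨p0⟩ := hconn.preconnected v u
    cases p0 with
    | nil => exact absurd rfl hu
    | @cons _ s _ h q => exact ⟨s, h⟩
  -- handshake
  have hhand : ∑ v, U.degree v = 2 * n := by
    rw [SimpleGraph.sum_degrees_eq_twice_card_edges, hedges]
  have hhandR : ∑ v, (U.degree v : ℝ) = 2 * (n : ℝ) := by
    exact_mod_cast congrArg (Nat.cast : ℕ → ℝ) hhand
  -- sum of (D-2) is zero
  have hzero : ∑ v, ((U.degree v : ℝ) - 2) = 0 := by
    rw [Finset.sum_sub_distrib, hhandR, Finset.sum_const, Finset.card_univ, hcard,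
      nsmul_eq_mul]
    ring
  -- replace D(D-2) by (D-1)(D-2)
  have hDD : ∑ v, (U.degree v : ℝ) * ((U.degree v : ℝ) - 2)
      = ∑ v, ((U.degree v : ℝ) - 1) * ((U.degree v : ℝ) - 2) := by
    have : ∀ v : V, (U.degree v : ℝ) * ((U.degree v : ℝ) - 2)
        = ((U.degree v : ℝ) - 1) * ((U.degree v : ℝ) - 2) + ((U.degree v : ℝ) - 2) := by
      intro v; ring
    rw [Finset.sum_congr rfl fun v _ => this v, Finset.sum_add_distrib, hzero, add_zero]
  -- main decomposition
  have hGRM : GRM l U = ∑ e ∈ U.edgeFinset, xprod U e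
      + (2 + l) * ∑ v, ((U.degree v : ℝ) - 1) * ((U.degree v : ℝ) - 2)
      + (n : ℝ) * (2 + l) ^ 2 := by
    have h0 : GRM l U = ∑ e ∈ U.edgeFinset,
        Sym2.lift ⟨fun a b => ((U.degree a : ℝ) + l) * ((U.degree b : ℝ) + l),
          fun a b => by ring⟩ e := rfl
    rw [h0, grm_split U l, hDD, hedges]
  -- lower bound by sum of tf
  have hsum_tf : ∑ v, tf U l v
      = (2 + l) * ∑ v, ((U.degree v : ℝ) - 1) * ((U.degree v : ℝ) - 2)
        - ∑ v, (if 3 ≤ U.degree v then (pcount U v : ℝ) * ((U.degree v : ℝ) - 2) else 0) := by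
    rw [Finset.mul_sum, ← Finset.sum_sub_distrib]
    rfl
  have hGRMge : GRM l U ≥ ∑ v, tf U l v + (n : ℝ) * (2 + l) ^ 2 := by
    rw [hGRM, hsum_tf]
    have := sum_xprod_ge U
    linarith
  -- now bound the sum of tf below
  have htf0 : ∀ v : V, 0 ≤ tf U l v := tf_nonneg U l hl
  have hΔR : (6 : ℝ) ≤ (Δ : ℝ) := by exact_mod_cast hΔ6
  have hgoal : ∑ v, tf U l v ≥ (1 + l) * (((Δ : ℝ) - 1) * ((Δ : ℝ) - 2)) + 2 * l + 4 := by
    by_cases hcase : pcount U w + 2 ≤ Δ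
    · -- Case 1 : at least two non-pendant neighbors
      have hpw : (pcount U w : ℝ) ≤ (Δ : ℝ) - 2 := by
        have : (pcount U w : ℝ) + 2 ≤ (Δ : ℝ) := by exact_mod_cast hcase
        linarith
      have htw : tf U l w ≥ (1 + l) * (((Δ : ℝ) - 1) * ((Δ : ℝ) - 2)) + 2 * l + 4 := by
        rw [tf, hdw, if_pos hΔ3]
        nlinarith [mul_nonneg (by linarith : (0:ℝ) ≤ (Δ:ℝ) - 2)
          (by linarith : (0:ℝ) ≤ (Δ:ℝ) - 2 - (pcount U w : ℝ))]
      calc ∑ v, tf U l v ≥ tf U l w :=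
            Finset.single_le_sum (fun v _ => htf0 v) (Finset.mem_univ w)
        _ ≥ _ := htw
    · -- Case 2 : at most one non-pendant neighbor
      push_neg at hcase
      have hpq : pcount U w + qcount U w = Δ := by
        rw [pcount_add_qcount U w (hdpos w) (fun u _ => hdpos u), hdw]
      have hq1 : 1 ≤ qcount U w := by
        obtain ⟨u, huadj, hu2⟩ := exists_nbr_two_le_degree hconn hedgesV w (hdpos w)
        have : u ∈ (U.neighborFinset w).filter fun x => 2 ≤ U.degree x := by
          rw [Finset.mem_filter, SimpleGraph.mem_neighborFinset]
          exact ⟨huadj, hu2⟩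
        exact Finset.card_pos.2 ⟨u, this⟩
      have hpw : pcount U w = Δ - 1 := by omega
      -- there is a cycle
      have hcyc : ∃ (u : V) (c : U.Walk u u), c.IsCycle := by
        by_contra hno
        push_neg at hno
        have hac : U.IsAcyclic := fun v c hc => hno v c hc
        have htree : U.IsTree := ⟨hconn, hac⟩
        have := htree.card_edgeFinset
        omega
      obtain ⟨u₀, c, hc⟩ := hcyc
      -- w is not on the cycle
      have hwsupp : w ∉ c.support := by
        intro hws
        obtain ⟨a, b, hab, ha, hb, hasup, hbsup⟩ := cycle_two_nbrs hc hws
        have hsub : ({a, b} : Finset V) ⊆ (U.neighborFinset w).filter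
            fun x => 2 ≤ U.degree x := by
          intro x hx
          rcases Finset.mem_insert.1 hx with rfl | hx
          · rw [Finset.mem_filter, SimpleGraph.mem_neighborFinset]
            exact ⟨ha, cycle_two_le_degree hc hasup⟩
          · rw [Finset.mem_singleton] at hx; subst hx
            rw [Finset.mem_filter, SimpleGraph.mem_neighborFinset]
            exact ⟨hb, cycle_two_le_degree hc hbsup⟩
        have h2q : 2 ≤ qcount U w := by
          calc 2 = ({a, b} : Finset V).card := (Finset.card_pair hab).symm
            _ ≤ _ := Finset.card_le_card hsub
        omega
      -- entry vertex
      obtain ⟨p0⟩ := hconn.preconnected w u₀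
      obtain ⟨z, v, hzv, hz, hv, hzcase⟩ :=
        entry_lemma {x | x ∈ c.support} p0 hwsupp (c.start_mem_support)
      have hdegz : 2 ≤ U.degree z := by
        rcases hzcase with rfl | h2 <;> [skip; exact h2]
        rw [hdw]; omega
      obtain ⟨a, b, hab, ha, hb, hasup, hbsup⟩ := cycle_two_nbrs hc hv
      have hza : z ≠ a := fun he => hz (he ▸ hasup)
      have hzb : z ≠ b := fun he => hz (he ▸ hbsup)
      have hsub : ({z, a, b} : Finset V) ⊆ (U.neighborFinset v).filter
          fun x => 2 ≤ U.degree x := by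
        intro x hx
        rw [Finset.mem_filter, SimpleGraph.mem_neighborFinset]
        rcases Finset.mem_insert.1 hx with rfl | hx
        · exact ⟨hzv.symm, hdegz⟩
        rcases Finset.mem_insert.1 hx with rfl | hx
        · exact ⟨ha, cycle_two_le_degree hc hasup⟩
        · rw [Finset.mem_singleton] at hx; subst hx
          exact ⟨hb, cycle_two_le_degree hc hbsup⟩
      have hcard3 : ({z, a, b} : Finset V).card = 3 := by
        rw [Finset.card_insert_of_notMem (by simp [hza, hzb]), Finset.card_pair hab]
      have hq3 : 3 ≤ qcount U v := by
        calc 3 = ({z, a, b} : Finset V).card := hcard3.symm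
          _ ≤ _ := Finset.card_le_card hsub
      have hpqv : pcount U v + qcount U v = U.degree v := by
        exact pcount_add_qcount U v (hdpos v) (fun u _ => hdpos u)
      have hqd : qcount U v ≤ U.degree v := by omega
      have hdv3 : 3 ≤ U.degree v := le_trans hq3 hqd
      have hvw : v ≠ w := fun he => hwsupp (he ▸ hv)
      -- bound tf at v
      have hDv3 : (3 : ℝ) ≤ (U.degree v : ℝ) := by exact_mod_cast hdv3
      have hpvR : (pcount U v : ℝ) ≤ (U.degree v : ℝ) - 3 := by
        have : pcount U v + 3 ≤ U.degree v := by omega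
        have h2 : (pcount U v : ℝ) + 3 ≤ (U.degree v : ℝ) := by exact_mod_cast this
        linarith
      have htv : tf U l v ≥ 2 * l + 4 := by
        rw [tf, if_pos hdv3]
        nlinarith [mul_nonneg (by linarith : (0:ℝ) ≤ (U.degree v : ℝ) - 2)
            (by linarith : (0:ℝ) ≤ (U.degree v : ℝ) - 3 - (pcount U v : ℝ)),
          mul_nonneg (by linarith : (0:ℝ) ≤ (U.degree v : ℝ) - 3)
            (by linarith : (0:ℝ) ≤ 1 + l),
          mul_nonneg (mul_nonneg (by linarith : (0:ℝ) ≤ (U.degree v : ℝ) - 3)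
            (by linarith : (0:ℝ) ≤ 1 + l))
            (by linarith : (0:ℝ) ≤ (U.degree v : ℝ) - 2)]
      have htw : tf U l w ≥ (1 + l) * (((Δ : ℝ) - 1) * ((Δ : ℝ) - 2)) := by
        rw [tf, hdw, if_pos hΔ3]
        have hpwR : (pcount U w : ℝ) = (Δ : ℝ) - 1 := by
          rw [hpw]
          push_cast [Nat.cast_sub (by omega : 1 ≤ Δ)]
          ring
        rw [hpwR]
        nlinarith
      have hpair : tf U l w + tf U l v ≤ ∑ x, tf U l x := by
        have hsub2 : ({w, v} : Finset V) ⊆ Finset.univ := Finset.subset_univ _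
        have := Finset.sum_le_sum_of_subset_of_nonneg hsub2
          (fun i _ _ => htf0 i)
        rwa [Finset.sum_pair (Ne.symm hvw)] at this
      linarith
  -- final assembly
  have hident : ((Δ : ℝ) + l) * ((Δ : ℝ) + (Δ : ℝ) * l + 1)
      + ((n : ℝ) - (Δ : ℝ)) * (2 + l) ^ 2 + 3 * (2 + l)
      = (n : ℝ) * (2 + l) ^ 2 + ((1 + l) * (((Δ : ℝ) - 1) * ((Δ : ℝ) - 2)) + 2 * l + 4) := by
    ring
  rw [ge_iff_le, hident]
  linarith
end

section
/- Let λ ≥ -1/2 be a real number and let Δ ≥ 3 satisfy Δ = 2λ+6. If U is a unicyclic graph with n vertices and maximum degree Δ, then GRM_λ(U) ≥ 6(2+λ)³ + (n-2λ-6)(2+λ)². -/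
open SimpleGraph

section Aux
variable {V : Type*} [Fintype V] (G : SimpleGraph V) [DecidableRel G.Adj]

/-- ordered adjacent pairs -/
def Wpairs : Finset (V × V) := Finset.univ.filter fun p => G.Adj p.1 p.2

lemma sumW (F : V → V → ℝ) :
    ∑ p ∈ Wpairs G, F p.1 p.2 = ∑ v, ∑ u ∈ G.neighborFinset v, F v u := by
  rw [Wpairs, Finset.sum_filter, ← Finset.univ_product_univ, Finset.sum_product]
  exact Finset.sum_congr rfl fun v _ => by
    rw [neighborFinset_eq_filter, Finset.sum_filter]

lemma sumW_swap (F : V → V → ℝ) :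
    ∑ p ∈ Wpairs G, F p.1 p.2 = ∑ p ∈ Wpairs G, F p.2 p.1 := by
  refine Finset.sum_nbij' Prod.swap Prod.swap ?_ ?_ ?_ ?_ ?_ <;>
    simp +contextual [Wpairs, G.adj_comm]

lemma sumW_edges [DecidableEq V] (F : V → V → ℝ) (hF : ∀ a b, F a b = F b a) :
    ∑ p ∈ Wpairs G, F p.1 p.2 = 2 * ∑ e ∈ G.edgeFinset, Sym2.lift ⟨F, hF⟩ e := by
  have hmap : ∀ p ∈ Wpairs G, Sym2.mk p.1 p.2 ∈ G.edgeFinset := by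
    intro p hp
    simp only [Wpairs, Finset.mem_filter] at hp
    simpa [mem_edgeFinset] using hp.2
  rw [← Finset.sum_fiberwise_of_maps_to hmap (fun p : V × V => F p.1 p.2), Finset.mul_sum]
  refine Finset.sum_congr rfl ?_
  intro e he
  induction e with
  | _ a b =>
    have hab : G.Adj a b := by simpa [mem_edgeFinset] using he
    have hfib : {p ∈ Wpairs G | Sym2.mk p.1 p.2 = s(a, b)} = {(a, b), (b, a)} := by
      ext ⟨x, y⟩
      simp only [Wpairs, Finset.mem_filter, Finset.mem_univ, true_and, Finset.mem_insert,
        Finset.mem_singleton, Prod.mk.injEq, Sym2.eq_iff]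
      constructor
      · rintro ⟨-, (⟨rfl, rfl⟩ | ⟨rfl, rfl⟩)⟩ <;> simp
      · rintro (⟨rfl, rfl⟩ | ⟨rfl, rfl⟩) <;> simp [hab, hab.symm]
    rw [hfib, Finset.sum_pair (by simp [hab.ne])]
    simp only [Sym2.lift_mk]
    rw [hF b a]; ring

end Aux

lemma arith1 (x y : ℕ) (hx : 1 ≤ x) (hy : 1 ≤ y) :
    0 ≤ ((x:ℝ) - 2) * ((y:ℝ) - 2) + (if y = 1 then max ((x:ℝ) - 2) 0 else 0)
      + (if x = 1 then max ((y:ℝ) - 2) 0 else 0) := by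
  rcases eq_or_ne x 1 with rfl | hx1 <;> rcases eq_or_ne y 1 with rfl | hy1
  · norm_num
  · have hy2' : (2:ℝ) ≤ (y:ℝ) := by exact_mod_cast (by omega : 2 ≤ y)
    rw [if_pos rfl, if_neg hy1, max_eq_left (by linarith : (0:ℝ) ≤ (y:ℝ) - 2)]
    push_cast
    nlinarith
  · have hx2' : (2:ℝ) ≤ (x:ℝ) := by exact_mod_cast (by omega : 2 ≤ x)
    rw [if_pos rfl, if_neg hx1, max_eq_left (by linarith : (0:ℝ) ≤ (x:ℝ) - 2)]
    push_cast
    nlinarith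
  · have hx2' : (2:ℝ) ≤ (x:ℝ) := by exact_mod_cast (by omega : 2 ≤ x)
    have hy2' : (2:ℝ) ≤ (y:ℝ) := by exact_mod_cast (by omega : 2 ≤ y)
    rw [if_neg hx1, if_neg hy1]
    nlinarith

lemma arith2 (x : ℕ) :
    0 ≤ (x:ℝ) * ((x:ℝ) - 2) - 2 * max ((x:ℝ) - 2) 0 - ((x:ℝ) - 2) := by
  rcases le_or_gt x 2 with hx | hx
  · interval_cases x <;> norm_num
  · have hx3 : (3:ℝ) ≤ (x:ℝ) := by exact_mod_cast hx
    rw [max_eq_left (by linarith)]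
    nlinarith

lemma arith3 (x : ℕ) :
    (if x = 1 then (1:ℝ) else 0) ≤ max ((x:ℝ) - 2) 0 - ((x:ℝ) - 2) := by
  rcases le_or_gt x 2 with hx | hx
  · interval_cases x <;> norm_num
  · have hx3 : (3:ℝ) ≤ (x:ℝ) := by exact_mod_cast hx
    rw [max_eq_left (by linarith)]
    simp only [if_neg (by omega : x ≠ 1)]
    norm_num

theorem stmt7 {V : Type*} [Fintype V] (l : ℝ) (hl : -1/2 ≤ l)
    (n Δ : ℕ) (hΔ3 : 3 ≤ Δ) (heq : (Δ : ℝ) = 2 * l + 6)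
    (U : SimpleGraph V) (hU : IsUnicyclic U)
    (hcard : Fintype.card V = n) (hmax : maxDeg U = Δ) :
    GRM l U ≥ 6 * (2 + l) ^ 3 + ((n : ℝ) - 2 * l - 6) * (2 + l) ^ 2 := by
  letI := Classical.decEq V
  letI : DecidableRel U.Adj := Classical.decRel _
  have hmaxU : U.maxDegree = Δ := hmax
  have hc : (0:ℝ) < 2 + l := by linarith
  -- edge count and handshake
  have hecard : U.edgeFinset.card = n := by
    have h2 := hU.2
    rw [← coe_edgeFinset, Set.ncard_coe_finset] at h2
    rw [h2, hcard]
  have hhs : ∑ v, U.degree v = 2 * n := by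
    rw [U.sum_degrees_eq_twice_card_edges, hecard]
  -- nonempty, max degree vertex
  have hne : Nonempty V := by
    rcases isEmpty_or_nonempty V with h | h
    · exfalso
      have h0 : U.maxDegree = 0 := by
        rw [SimpleGraph.maxDegree]
        rw [Finset.univ_eq_empty, Finset.image_empty]
        rfl
      omega
    · exact h
  obtain ⟨v0, hv0⟩ := U.exists_maximal_degree_vertex
  have hdv0 : U.degree v0 = Δ := by omega
  have hdle : ∀ v, U.degree v ≤ Δ := fun v => hmaxU ▸ U.degree_le_maxDegree v
  -- key sums
  set T : ℝ := ∑ v, (U.degree v : ℝ) * ((U.degree v : ℝ) - 2) with hT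
  set Q : ℝ := ∑ v, max ((U.degree v : ℝ) - 2) 0 with hQ
  set P : ℝ := ∑ v, (if U.degree v = 1 then (1:ℝ) else 0) with hP
  set H : ℝ := ∑ p ∈ Wpairs U,
      (if U.degree p.2 = 1 then max ((U.degree p.1 : ℝ) - 2) 0 else 0) with hH
  -- (1) main per-pair inequality summed
  have hpair : ∀ p ∈ Wpairs U,
      (2+l) * ((U.degree p.1 : ℝ) - 2) + (2+l) * ((U.degree p.2 : ℝ) - 2) + (2+l)^2
        - (if U.degree p.2 = 1 then max ((U.degree p.1 : ℝ) - 2) 0 else 0)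
        - (if U.degree p.1 = 1 then max ((U.degree p.2 : ℝ) - 2) 0 else 0)
      ≤ ((U.degree p.1 : ℝ) + l) * ((U.degree p.2 : ℝ) + l) := by
    rintro ⟨a, b⟩ hp
    simp only [Wpairs, Finset.mem_filter, Finset.mem_univ, true_and] at hp
    have ha1 : 1 ≤ U.degree a := by
      rw [Nat.one_le_iff_ne_zero, ← Nat.pos_iff_ne_zero, U.degree_pos_iff_exists_adj]
      exact ⟨b, hp⟩
    have hb1 : 1 ≤ U.degree b := by
      rw [Nat.one_le_iff_ne_zero, ← Nat.pos_iff_ne_zero, U.degree_pos_iff_exists_adj]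
      exact ⟨a, hp.symm⟩
    have := arith1 (U.degree a) (U.degree b) ha1 hb1
    nlinarith [this]
  have hsum := Finset.sum_le_sum hpair
  -- identify the sums
  have eT : ∑ p ∈ Wpairs U, ((U.degree p.1 : ℝ) - 2) = T := by
    refine (sumW U (fun a _b => ((U.degree a : ℝ) - 2))).trans ?_
    rw [hT]
    refine Finset.sum_congr rfl fun v _ => ?_
    rw [Finset.sum_const, card_neighborFinset_eq_degree, nsmul_eq_mul]
  have eT2 : ∑ p ∈ Wpairs U, ((U.degree p.2 : ℝ) - 2) = T := by
    have h := sumW_swap U (fun a b => ((U.degree a : ℝ) - 2))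
    exact h.symm.trans eT
  have eConst : ∑ _p ∈ Wpairs U, (2+l)^2 = (2+l)^2 * (2 * (n:ℝ)) := by
    refine (sumW U (fun _a _b => ((2:ℝ)+l)^2)).trans ?_
    have h1 : ∀ v : V, ∑ _u ∈ U.neighborFinset v, ((2:ℝ)+l)^2
        = (U.degree v : ℝ) * (2+l)^2 := fun v => by
      rw [Finset.sum_const, card_neighborFinset_eq_degree, nsmul_eq_mul]
    rw [Finset.sum_congr rfl fun v _ => h1 v, ← Finset.sum_mul, ← Nat.cast_sum, hhs]
    push_cast; ring
  have eH2 : ∑ p ∈ Wpairs U,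
      (if U.degree p.1 = 1 then max ((U.degree p.2 : ℝ) - 2) 0 else 0) = H := by
    have h := sumW_swap U
      (fun a b => (if U.degree b = 1 then max ((U.degree a : ℝ) - 2) 0 else 0))
    rw [hH]
    exact h.symm
  -- sum of LHS
  have hLHS : ∑ p ∈ Wpairs U,
      ((2+l) * ((U.degree p.1 : ℝ) - 2) + (2+l) * ((U.degree p.2 : ℝ) - 2) + (2+l)^2
        - (if U.degree p.2 = 1 then max ((U.degree p.1 : ℝ) - 2) 0 else 0)
        - (if U.degree p.1 = 1 then max ((U.degree p.2 : ℝ) - 2) 0 else 0))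
      = (2+l) * T + (2+l) * T + (2+l)^2 * (2 * n) - H - H := by
    nth_rewrite 1 [← eT]
    nth_rewrite 1 [← eT2]
    rw [← eConst]
    nth_rewrite 1 [hH]
    rw [← eH2]
    rw [Finset.mul_sum, Finset.mul_sum, ← Finset.sum_add_distrib, ← Finset.sum_add_distrib,
      ← Finset.sum_sub_distrib, ← Finset.sum_sub_distrib]
  -- sum of RHS is 2 * GRM
  have hGRM : ∑ p ∈ Wpairs U, ((U.degree p.1 : ℝ) + l) * ((U.degree p.2 : ℝ) + l)
      = 2 * GRM l U := by
    exact sumW_edges U (fun a b => ((U.degree a : ℝ) + l) * ((U.degree b : ℝ) + l))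
      (fun a b => by ring)
  rw [hLHS, hGRM] at hsum
  -- bound H
  have hHP : H ≤ ((Δ:ℝ) - 2) * P := by
    have step1 : H ≤ ∑ p ∈ Wpairs U, ((Δ:ℝ) - 2) * (if U.degree p.2 = 1 then (1:ℝ) else 0) := by
      rw [hH]
      refine Finset.sum_le_sum fun p _ => ?_
      by_cases h2 : U.degree p.2 = 1
      · simp only [if_pos h2, mul_one]
        have := hdle p.1
        have hcast : (U.degree p.1 : ℝ) ≤ (Δ:ℝ) := by exact_mod_cast this
        have hΔ2 : (2:ℝ) ≤ (Δ:ℝ) := by exact_mod_cast (by omega : 2 ≤ Δ)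
        exact max_le (by linarith) (by linarith)
      · simp [if_neg h2]
    have step2 : ∑ p ∈ Wpairs U, (if U.degree p.2 = 1 then (1:ℝ) else 0) = P := by
      have h := sumW_swap U (fun a _b => (if U.degree a = 1 then (1:ℝ) else 0))
      refine Eq.trans h.symm ?_
      refine (sumW U (fun a _b => (if U.degree a = 1 then (1:ℝ) else 0))).trans ?_
      rw [hP]
      refine Finset.sum_congr rfl fun v _ => ?_
      rw [Finset.sum_const, card_neighborFinset_eq_degree, nsmul_eq_mul]
      by_cases hv : U.degree v = 1 <;> simp [hv]
    calc H ≤ ∑ p ∈ Wpairs U, ((Δ:ℝ) - 2) * (if U.degree p.2 = 1 then (1:ℝ) else 0) := step1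
      _ = ((Δ:ℝ) - 2) * P := by rw [← Finset.mul_sum, step2]
  -- global degree sum facts
  have hsum0 : ∑ v, ((U.degree v : ℝ) - 2) = 0 := by
    rw [Finset.sum_sub_distrib, ← Nat.cast_sum, hhs, Finset.sum_const, Finset.card_univ,
      hcard, nsmul_eq_mul]
    push_cast; ring
  have hPQ : P ≤ Q := by
    have key : ∀ v : V, (if U.degree v = 1 then (1:ℝ) else 0)
        ≤ max ((U.degree v : ℝ) - 2) 0 - ((U.degree v : ℝ) - 2) := fun v => arith3 (U.degree v)
    have := Finset.sum_le_sum fun v (_ : v ∈ Finset.univ) => key v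
    rw [Finset.sum_sub_distrib] at this
    rw [hP, hQ]
    calc P ≤ Q - ∑ v, ((U.degree v : ℝ) - 2) := this
      _ = Q := by rw [hsum0]; ring
  -- main vertex-sum bound
  have hTQ : ((Δ:ℝ) - 2) * ((Δ:ℝ) - 3) + 2 * Q ≤ T := by
    set ψ : V → ℝ := fun v =>
      (U.degree v : ℝ) * ((U.degree v : ℝ) - 2) - 2 * max ((U.degree v : ℝ) - 2) 0
        - ((U.degree v : ℝ) - 2) with hψ
    have hψ0 : ∀ v, 0 ≤ ψ v := fun v => arith2 (U.degree v)
    have hψv0 : ψ v0 = ((Δ:ℝ) - 2) * ((Δ:ℝ) - 3) := by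
      simp only [hψ, hdv0]
      have hΔ2 : (2:ℝ) ≤ (Δ:ℝ) := by exact_mod_cast (by omega : 2 ≤ Δ)
      rw [max_eq_left (by linarith)]
      ring
    have hsingle : ψ v0 ≤ ∑ v, ψ v :=
      Finset.single_le_sum (fun v _ => hψ0 v) (Finset.mem_univ v0)
    have hsplit : ∑ v, ψ v = T - 2 * Q - ∑ v, ((U.degree v : ℝ) - 2) := by
      rw [hT, hQ]
      simp only [hψ, Finset.sum_sub_distrib, ← Finset.mul_sum]
    rw [hsplit, hsum0] at hsingle
    rw [← hψv0]
    linarith [hsingle]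
  -- final arithmetic
  have hΔcast : ((Δ:ℝ) - 2) = 2 * (2 + l) := by rw [heq]; ring
  rw [ge_iff_le]
  have hcT : (2 + l) * (((Δ:ℝ) - 2) * ((Δ:ℝ) - 3) + 2 * Q) ≤ (2 + l) * T :=
    mul_le_mul_of_nonneg_left hTQ (le_of_lt hc)
  have hHQ : H ≤ ((Δ:ℝ) - 2) * Q := by
    have h0 : (0:ℝ) ≤ (Δ:ℝ) - 2 := by rw [hΔcast]; linarith
    calc H ≤ ((Δ:ℝ) - 2) * P := hHP
      _ ≤ ((Δ:ℝ) - 2) * Q := mul_le_mul_of_nonneg_left hPQ h0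
  rw [heq] at hcT hHQ
  nlinarith [hsum, hcT, hHQ, hc]
end
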